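/- arXiv:1704.05491 — 3 statements merged into one kernel-verified Lean document; each statement's English description precedes it below -/
import Mathlib

section
/- Let P_1, …, P_N be discrete probability measures on ℝ^d and λ_1, …, λ_N > 0 with ∑_{i=1}^N λ_i = 1. Then the infimum of φ over all probability measures on ℝ^d with finite second moment is attained by some probability measure supported in the finite set S = {∑_{i=1}^N λ_i x_i : x_i ∈ supp(P_i)}; in particular, a barycenter exists and inf_{supp(P) ⊆ S} φ(P) = inf_P φ(P). -/
open MeasureTheory ENNReal

/-- Points of `ℝ^d`. -/
abbrev Pt (d : ℕ) := EuclideanSpace ℝ (Fin d)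

/-- The set of atoms (support points) of a measure. -/
def msupp {α : Type*} [MeasurableSpace α] (P : Measure α) : Set α := {x | P {x} ≠ 0}

/-- A measure is finitely supported (discrete) if its set of atoms is finite and
carries all the mass. -/
def FinitelySupported {α : Type*} [MeasurableSpace α] (P : Measure α) : Prop :=
  (msupp P).Finite ∧ P (msupp P)ᶜ = 0

/-- Finite second moment. -/
def FiniteSecondMoment {d : ℕ} (P : Measure (Pt d)) : Prop :=
  ∫⁻ x, ENNReal.ofReal (‖x‖ ^ 2) ∂P < ⊤

/-- The squared 2-Wasserstein distance: the infimum of `∫ ‖x - y‖² dπ` over all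
couplings `π` of `P` and `Q`. -/
noncomputable def W2sq {d : ℕ} (P Q : Measure (Pt d)) : ℝ≥0∞ :=
  ⨅ π ∈ {π : Measure (Pt d × Pt d) | π.map Prod.fst = P ∧ π.map Prod.snd = Q},
    ∫⁻ p, ENNReal.ofReal (‖p.1 - p.2‖ ^ 2) ∂π

/-- The barycenter objective `φ(P) = ∑ i, λ i * W₂(P, P i)²`. -/
noncomputable def phi {d N : ℕ} (l : Fin N → ℝ) (Pm : Fin N → Measure (Pt d))
    (P : Measure (Pt d)) : ℝ≥0∞ :=
  ∑ i, ENNReal.ofReal (l i) * W2sq P (Pm i)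

/-- A (Wasserstein) barycenter: a probability measure with finite second moment
minimizing `φ` among all such measures. -/
def IsBarycenter {d N : ℕ} (l : Fin N → ℝ) (Pm : Fin N → Measure (Pt d))
    (P : Measure (Pt d)) : Prop :=
  IsProbabilityMeasure P ∧ FiniteSecondMoment P ∧
    ∀ Q : Measure (Pt d), IsProbabilityMeasure Q → FiniteSecondMoment Q →
      phi l Pm P ≤ phi l Pm Q

/-- The set `S` of weighted centroids of combinations of support points,
one from each measure. -/
def centroidSet {d N : ℕ} (l : Fin N → ℝ) (Pm : Fin N → Measure (Pt d)) : Set (Pt d) :=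
  {y | ∃ x : Fin N → Pt d, (∀ i, x i ∈ msupp (Pm i)) ∧ y = ∑ i, l i • x i}

/-- The union `S_org` of the supports of the measures. -/
def origSupport {d N : ℕ} (Pm : Fin N → Measure (Pt d)) : Set (Pt d) :=
  ⋃ i, msupp (Pm i)

/-! ### Auxiliary lemmas -/

open Finset ProbabilityTheory RealInnerProductSpace

lemma finset_meas {d : ℕ} (t : Finset (Pt d)) : MeasurableSet (↑t : Set (Pt d)) :=
  t.finite_toSet.measurableSet

lemma sum_singleton_meas {α : Type*} [MeasurableSpace α] [MeasurableSingletonClass α]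
    (μ : Measure α) (t : Finset α) :
    ∑ s ∈ t, μ {s} = μ ↑t := by
  classical
  have := measure_biUnion_finset (μ := μ) (s := t) (f := fun s => ({s} : Set α))
    (fun a _ b _ hab => by simp [Set.disjoint_singleton, hab])
    (fun b _ => measurableSet_singleton b)
  rw [← this]
  congr 1
  ext z; simp

lemma sum_subtype_filter {α : Type*} (F : Finset α) (P : α → Prop) [DecidablePred P]
    {β : Type*} [AddCommMonoid β] (f : α → β) :
    ∑ y ∈ Finset.univ.filter (fun y : ↥F => P ↑y), f ↑y = ∑ y ∈ F.filter P, f y := by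
  classical
  rw [Finset.sum_filter, Finset.sum_filter, Finset.sum_coe_sort F (fun y => if P y then f y else 0)]

lemma sum_filter_piFinset {N : ℕ} {α : Type*} [DecidableEq α] {β : Type*} [CommSemiring β]
    (t : Fin N → Finset α) (g : Fin N → α → β) (i : Fin N) (s : α) (hs : s ∈ t i)
    (h1 : ∀ j, ∑ u ∈ t j, g j u = 1) :
    ∑ y ∈ (Fintype.piFinset t).filter (fun y => y i = s), ∏ j, g j (y j) = g i s := by
  classical
  have hset : (Fintype.piFinset t).filter (fun y => y i = s)
      = Fintype.piFinset (Function.update t i {s}) := by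
    ext y
    simp only [Finset.mem_filter, Fintype.mem_piFinset]
    constructor
    · rintro ⟨hy, hyi⟩ j
      rcases eq_or_ne j i with rfl | hj
      · simp [Function.update, hyi]
      · simpa [Function.update, hj] using hy j
    · intro hy
      have hyi : y i = s := by simpa [Function.update] using hy i
      refine ⟨fun j => ?_, hyi⟩
      rcases eq_or_ne j i with rfl | hj
      · rw [hyi]; exact hs
      · simpa [Function.update, hj] using hy j
  rw [hset, ← Finset.prod_univ_sum]
  rw [← Finset.mul_prod_erase _ _ (Finset.mem_univ i)]
  have h2 : ∑ u ∈ Function.update t i {s} i, g i u = g i s := by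
    simp [Function.update]
  rw [h2]
  have h3 : ∀ j ∈ Finset.univ.erase i, ∑ u ∈ Function.update t i {s} j, g j u = 1 := by
    intro j hj
    have hj' : j ≠ i := (Finset.mem_erase.mp hj).1
    rw [Function.update_of_ne hj']; exact h1 j
  rw [Finset.prod_congr rfl h3]
  simp

lemma centroid_min_real {d N : ℕ} (l : Fin N → ℝ) (hsum : ∑ i, l i = 1)
    (y : Fin N → Pt d) (x : Pt d) :
    ∑ i, l i * ‖(∑ j, l j • y j) - y i‖ ^ 2 ≤ ∑ i, l i * ‖x - y i‖ ^ 2 := by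
  set B : Pt d := ∑ j, l j • y j with hB
  have hinner : ∀ z : Pt d, ⟪z, B⟫ = ∑ i, l i * ⟪z, y i⟫ := by
    intro z
    rw [hB, inner_sum]
    exact Finset.sum_congr rfl fun i _ => real_inner_smul_right _ _ _
  have key : ∑ i, l i * ‖x - y i‖ ^ 2 - ∑ i, l i * ‖B - y i‖ ^ 2 = ‖x - B‖ ^ 2 := by
    rw [← Finset.sum_sub_distrib]
    have h1 : ∀ i ∈ Finset.univ, l i * ‖x - y i‖ ^ 2 - l i * ‖B - y i‖ ^ 2
        = l i * (‖x‖ ^ 2 - ‖B‖ ^ 2) - 2 * (l i * ⟪x, y i⟫) + 2 * (l i * ⟪B, y i⟫) := by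
      intro i _
      rw [norm_sub_sq_real, norm_sub_sq_real]; ring
    rw [Finset.sum_congr rfl h1]
    rw [Finset.sum_add_distrib, Finset.sum_sub_distrib, ← Finset.sum_mul, hsum,
      ← Finset.mul_sum, ← Finset.mul_sum, ← hinner, ← hinner,
      real_inner_self_eq_norm_sq, norm_sub_sq_real]
    ring
  nlinarith [sq_nonneg ‖x - B‖]

lemma centroid_min_ennreal {d N : ℕ} (l : Fin N → ℝ) (hl : ∀ i, 0 ≤ l i)
    (hsum : ∑ i, l i = 1) (y : Fin N → Pt d) (x : Pt d) :
    ∑ i, ENNReal.ofReal (l i) * ENNReal.ofReal (‖(∑ j, l j • y j) - y i‖ ^ 2)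
      ≤ ∑ i, ENNReal.ofReal (l i) * ENNReal.ofReal (‖x - y i‖ ^ 2) := by
  have h1 : ∀ (z : Pt d), ∑ i, ENNReal.ofReal (l i) * ENNReal.ofReal (‖z - y i‖ ^ 2)
      = ENNReal.ofReal (∑ i, l i * ‖z - y i‖ ^ 2) := by
    intro z
    rw [ENNReal.ofReal_sum_of_nonneg fun i _ => mul_nonneg (hl i) (sq_nonneg _)]
    exact Finset.sum_congr rfl fun i _ => (ENNReal.ofReal_mul (hl i)).symm
  rw [h1, h1]
  exact ENNReal.ofReal_le_ofReal (centroid_min_real l hsum y x)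

lemma discrete_repr {d : ℕ} (P : Measure (Pt d)) (t : Finset (Pt d))
    (ht : P (↑t)ᶜ = 0) :
    P = ∑ s ∈ t, P {s} • Measure.dirac s := by
  classical
  ext A hA
  rw [Measure.finset_sum_apply]
  have h2 : P (A \ ↑t) = 0 := measure_mono_null (Set.diff_subset_compl A ↑t) ht
  have h1 : P A = P (A ∩ ↑t) := by
    rw [← measure_inter_add_diff A (finset_meas t), h2, add_zero]
  have h3 : A ∩ ↑t = ↑(t.filter (· ∈ A)) := by
    ext z; simp [and_comm]
  rw [h1, h3, ← sum_singleton_meas P (t.filter (· ∈ A))]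
  rw [Finset.sum_filter]
  refine Finset.sum_congr rfl fun s _ => ?_
  rw [Measure.smul_apply, Measure.dirac_apply' _ hA, smul_eq_mul]
  by_cases hs : s ∈ A <;> simp [hs, Set.indicator]

lemma exists_LP_min {ι : Type*} [Fintype ι] (K : Set (ι → ℝ)) (hKne : K.Nonempty)
    (hKcl : IsClosed K) (hKbd : ∀ v ∈ K, ∀ y, |v y| ≤ 1) (cr : ι → ℝ) :
    ∃ v ∈ K, ∀ v' ∈ K, ∑ y, v y * cr y ≤ ∑ y, v' y * cr y := by
  have hbd : Bornology.IsBounded K := by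
    refine (Metric.isBounded_closedBall (x := (0 : ι → ℝ)) (r := 1)).subset ?_
    intro v hv
    rw [Metric.mem_closedBall, dist_pi_le_iff zero_le_one]
    intro y
    rw [Real.dist_eq]; simpa using hKbd v hv y
  have hcomp : IsCompact K := Metric.isCompact_of_isClosed_isBounded hKcl hbd
  have hcont : Continuous fun v : ι → ℝ => ∑ y, v y * cr y :=
    continuous_finset_sum _ fun y _ => (continuous_apply y).mul continuous_const
  obtain ⟨v, hvK, hmin⟩ := hcomp.exists_isMinOn hKne hcont.continuousOn
  exact ⟨v, hvK, fun v' hv' => hmin hv'⟩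

lemma fsm_of_supported {d : ℕ} (P : Measure (Pt d)) [IsProbabilityMeasure P]
    (S : Finset (Pt d)) (h : P (↑S)ᶜ = 0) : FiniteSecondMoment P := by
  classical
  set C : ℝ≥0∞ := ∑ z ∈ S, ENNReal.ofReal (‖z‖ ^ 2) with hC
  have hae : ∀ᵐ x ∂P, ENNReal.ofReal (‖x‖ ^ 2) ≤ C := by
    have hmem : ∀ᵐ x ∂P, x ∈ (↑S : Set (Pt d)) := by
      rw [MeasureTheory.ae_iff]
      exact h
    filter_upwards [hmem] with x hx
    exact Finset.single_le_sum (f := fun z => ENNReal.ofReal (‖z‖ ^ 2)) (fun z _ => zero_le) hx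
  calc ∫⁻ x, ENNReal.ofReal (‖x‖ ^ 2) ∂P ≤ ∫⁻ _, C ∂P := lintegral_mono_ae hae
    _ = C := by simp
    _ < ⊤ := ENNReal.sum_lt_top.mpr fun z _ => ENNReal.ofReal_lt_top


section Glue

variable {d N : ℕ} [DecidableEq (Pt d)]

lemma glue_bound (l : Fin N → ℝ) (hl : ∀ i, 0 ≤ l i) (hsuml : ∑ i, l i = 1)
    (Pm : Fin N → Measure (Pt d))
    (t : Fin N → Finset (Pt d)) (ht : ∀ i, Pm i (↑(t i))ᶜ = 0)
    (Q : Measure (Pt d)) [IsProbabilityMeasure Q]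
    (π : Fin N → Measure (Pt d × Pt d))
    (hπ1 : ∀ i, (π i).map Prod.fst = Q) (hπ2 : ∀ i, (π i).map Prod.snd = Pm i)
    (centroid_min_ennreal : ∀ (y : Fin N → Pt d) (x : Pt d),
      ∑ i, ENNReal.ofReal (l i) * ENNReal.ofReal (‖(∑ j, l j • y j) - y i‖ ^ 2)
      ≤ ∑ i, ENNReal.ofReal (l i) * ENNReal.ofReal (‖x - y i‖ ^ 2)) :
    ∃ w : (Fin N → Pt d) → ℝ≥0∞,
      (∀ y, w y ≤ 1) ∧
      (∀ i, ∀ s ∈ t i, ∑ y ∈ (Fintype.piFinset t).filter (fun y => y i = s), w y = Pm i {s}) ∧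
      ∑ y ∈ Fintype.piFinset t,
          w y * ∑ i, ENNReal.ofReal (l i) * ENNReal.ofReal (‖(∑ j, l j • y j) - y i‖ ^ 2)
        ≤ ∑ i, ENNReal.ofReal (l i) * ∫⁻ p, ENNReal.ofReal (‖p.1 - p.2‖ ^ 2) ∂(π i) := by
  classical
  -- each π i is a probability measure
  have hπprob : ∀ i, IsProbabilityMeasure (π i) := by
    intro i
    constructor
    have : π i Set.univ = ((π i).map Prod.fst) Set.univ := by
      rw [Measure.map_apply measurable_fst MeasurableSet.univ]; rfl
    rw [this, hπ1 i, measure_univ]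
  have hπfin : ∀ i, IsFiniteMeasure (π i) := fun i => by haveI := hπprob i; infer_instance
  -- conditional kernels
  set κ : Fin N → Kernel (Pt d) (Pt d) := fun i =>
    haveI := hπfin i
    (π i).condKernel with hκdef
  haveI hκM : ∀ i, IsMarkovKernel (κ i) := by
    intro i; haveI := hπfin i; infer_instance
  have hdis : ∀ i, Q ⊗ₘ κ i = π i := by
    intro i
    haveI := hπfin i
    have hfst : (π i).fst = Q := by rw [Measure.fst]; exact hπ1 i
    rw [hκdef, ← hfst]
    exact (π i).disintegrate _
  -- the key integral identity
  have hInt : ∀ i (B : Set (Pt d)), MeasurableSet B → ∫⁻ x, κ i x B ∂Q = Pm i B := by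
    intro i B hB
    have h1 : ∫⁻ x, κ i x B ∂Q = (Q ⊗ₘ κ i) (Prod.snd ⁻¹' B) := by
      rw [Measure.compProd_apply (measurable_snd hB)]
      apply lintegral_congr
      intro x
      congr 1
    rw [h1, hdis i, ← Measure.map_apply measurable_snd hB, hπ2 i]
  -- a.e., the kernels give mass one to the supports
  have hae : ∀ᵐ x ∂Q, ∀ i, ∑ u ∈ t i, κ i x {u} = 1 := by
    rw [ae_all_iff]
    intro i
    have h0 : ∫⁻ x, κ i x (↑(t i))ᶜ ∂Q = 0 := by
      rw [hInt i _ (finset_meas (t i)).compl]; exact ht i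
    have h0' : ∀ᵐ x ∂Q, κ i x (↑(t i))ᶜ = 0 := by
      have := (lintegral_eq_zero_iff (Kernel.measurable_coe (κ i) (finset_meas (t i)).compl)).mp h0
      filter_upwards [this] with x hx using hx
    filter_upwards [h0'] with x hx
    rw [sum_singleton_meas (κ i x) (t i)]
    have h2 := measure_add_measure_compl (μ := κ i x) (finset_meas (t i))
    rw [hx, add_zero, measure_univ] at h2
    exact h2
  -- the glued weights
  set w : (Fin N → Pt d) → ℝ≥0∞ := fun y => ∫⁻ x, ∏ j, κ j x {y j} ∂Q with hwdef
  have hwm : ∀ y : Fin N → Pt d, Measurable fun x => ∏ j, κ j x {y j} :=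
    fun y => Finset.measurable_prod _ fun j _ => Kernel.measurable_coe _ (measurableSet_singleton _)
  refine ⟨w, ?_, ?_, ?_⟩
  · -- bounded by 1
    intro y
    calc w y ≤ ∫⁻ _, 1 ∂Q := lintegral_mono fun x =>
          Finset.prod_le_one (fun j _ => zero_le) (fun j _ => prob_le_one)
    _ = 1 := by simp
  · -- marginal constraints
    intro i s hs
    rw [← lintegral_finset_sum _ (fun y _ => hwm y)]
    have : ∫⁻ x, ∑ y ∈ (Fintype.piFinset t).filter (fun y => y i = s), ∏ j, κ j x {y j} ∂Q
        = ∫⁻ x, κ i x {s} ∂Q := by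
      apply lintegral_congr_ae
      filter_upwards [hae] with x hx
      exact sum_filter_piFinset t (fun j u => κ j x {u}) i s hs hx
    rw [this, hInt i _ (measurableSet_singleton s)]
  · -- cost bound
    set F := Fintype.piFinset t with hF
    set c : (Fin N → Pt d) → ℝ≥0∞ := fun y =>
      ∑ i, ENNReal.ofReal (l i) * ENNReal.ofReal (‖(∑ j, l j • y j) - y i‖ ^ 2) with hc
    have hmeas_f : Measurable fun p : Pt d × Pt d => ENNReal.ofReal (‖p.1 - p.2‖ ^ 2) :=
      (((continuous_fst.sub continuous_snd).norm.pow 2).measurable).ennreal_ofReal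
    have hmeas_g : ∀ i, Measurable fun x => ∫⁻ y', ENNReal.ofReal (‖x - y'‖ ^ 2) ∂(κ i x) := by
      intro i
      exact Measurable.lintegral_kernel_prod_right (f := fun x y' => ENNReal.ofReal (‖x - y'‖ ^ 2))
        hmeas_f
    calc ∑ y ∈ F, w y * c y
        = ∫⁻ x, ∑ y ∈ F, (∏ j, κ j x {y j}) * c y ∂Q := by
          rw [lintegral_finset_sum _ (fun y _ => (hwm y).mul_const _)]
          exact Finset.sum_congr rfl fun y _ => (lintegral_mul_const _ (hwm y)).symm
      _ ≤ ∫⁻ x, ∑ i, ENNReal.ofReal (l i) * ∫⁻ y', ENNReal.ofReal (‖x - y'‖ ^ 2) ∂(κ i x) ∂Q := by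
          apply lintegral_mono_ae
          filter_upwards [hae] with x hx
          calc ∑ y ∈ F, (∏ j, κ j x {y j}) * c y
              ≤ ∑ y ∈ F, (∏ j, κ j x {y j})
                  * ∑ i, ENNReal.ofReal (l i) * ENNReal.ofReal (‖x - y i‖ ^ 2) :=
                Finset.sum_le_sum fun y _ => mul_le_mul_right (centroid_min_ennreal y x) _
            _ = ∑ i, ∑ y ∈ F, (∏ j, κ j x {y j})
                  * (ENNReal.ofReal (l i) * ENNReal.ofReal (‖x - y i‖ ^ 2)) := by
                rw [Finset.sum_comm]
                exact Finset.sum_congr rfl fun y _ => Finset.mul_sum _ _ _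
            _ = ∑ i, ENNReal.ofReal (l i) * ∑ s ∈ t i, κ i x {s} * ENNReal.ofReal (‖x - s‖ ^ 2) := by
                refine Finset.sum_congr rfl fun i _ => ?_
                have hpull : ∑ y ∈ F, (∏ j, κ j x {y j})
                    * (ENNReal.ofReal (l i) * ENNReal.ofReal (‖x - y i‖ ^ 2))
                    = ENNReal.ofReal (l i)
                      * ∑ y ∈ F, (∏ j, κ j x {y j}) * ENNReal.ofReal (‖x - y i‖ ^ 2) := by
                  rw [Finset.mul_sum]
                  exact Finset.sum_congr rfl fun y _ => by ring
                rw [hpull]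
                congr 1
                have hmaps : ∀ y ∈ F, y i ∈ t i := fun y hy => (Fintype.mem_piFinset.mp hy) i
                rw [← Finset.sum_fiberwise_of_maps_to hmaps
                  (fun y => (∏ j, κ j x {y j}) * ENNReal.ofReal (‖x - y i‖ ^ 2))]
                refine Finset.sum_congr rfl fun s hs => ?_
                have hcongr : ∀ y ∈ F.filter (fun y => y i = s),
                    (∏ j, κ j x {y j}) * ENNReal.ofReal (‖x - y i‖ ^ 2)
                    = (∏ j, κ j x {y j}) * ENNReal.ofReal (‖x - s‖ ^ 2) := by
                  intro y hy
                  rw [(Finset.mem_filter.mp hy).2]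
                rw [Finset.sum_congr rfl hcongr, ← Finset.sum_mul,
                  sum_filter_piFinset t (fun j u => κ j x {u}) i s hs hx]
            _ ≤ ∑ i, ENNReal.ofReal (l i) * ∫⁻ y', ENNReal.ofReal (‖x - y'‖ ^ 2) ∂(κ i x) := by
                refine Finset.sum_le_sum fun i _ => mul_le_mul_right ?_ _
                have heq : ∑ s ∈ t i, κ i x {s} * ENNReal.ofReal (‖x - s‖ ^ 2)
                    = ∫⁻ y' in ↑(t i), ENNReal.ofReal (‖x - y'‖ ^ 2) ∂(κ i x) := by
                  have hU : (↑(t i) : Set (Pt d)) = ⋃ s ∈ t i, {s} := by ext z; simp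
                  rw [hU, lintegral_biUnion_finset
                    (fun a _ b _ hab => by simp [Set.disjoint_singleton, hab])
                    (fun b _ => measurableSet_singleton b)]
                  exact Finset.sum_congr rfl fun s _ => by
                    rw [lintegral_singleton]; ring
                rw [heq]
                exact setLIntegral_le_lintegral _ _
      _ = ∑ i, ENNReal.ofReal (l i) * ∫⁻ p, ENNReal.ofReal (‖p.1 - p.2‖ ^ 2) ∂(π i) := by
          rw [lintegral_finset_sum _ (fun i _ => ((hmeas_g i).const_mul _))]
          refine Finset.sum_congr rfl fun i _ => ?_
          rw [lintegral_const_mul _ (hmeas_g i)]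
          congr 1
          rw [← hdis i, Measure.lintegral_compProd hmeas_f]

end Glue
lemma exists_min_measure {d N : ℕ} [DecidableEq (Pt d)] (l : Fin N → ℝ) (Pm : Fin N → Measure (Pt d))
    (hl : ∀ i, 0 < l i) (hsum : ∑ i, l i = 1)
    (hprob : ∀ i, IsProbabilityMeasure (Pm i))
    (hfin : ∀ i, FinitelySupported (Pm i)) :
    ∃ P : Measure (Pt d), IsProbabilityMeasure P ∧ P (centroidSet l Pm)ᶜ = 0 ∧
      ∀ Q : Measure (Pt d), IsProbabilityMeasure Q → phi l Pm P ≤ phi l Pm Q := by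
  classical
  have hl0 : ∀ i, 0 ≤ l i := fun i => (hl i).le
  have hNpos : 0 < N := by
    rcases Nat.eq_zero_or_pos N with h | h
    · subst h; simp at hsum
    · exact h
  set i0 : Fin N := ⟨0, hNpos⟩ with hi0
  set t : Fin N → Finset (Pt d) := fun i => (hfin i).1.toFinset with htdef
  have htmem : ∀ i (u : Pt d), u ∈ t i ↔ u ∈ msupp (Pm i) := fun i u => (hfin i).1.mem_toFinset
  have ht0 : ∀ i, Pm i (↑(t i))ᶜ = 0 := fun i => by
    rw [show (↑(t i) : Set (Pt d)) = msupp (Pm i) from (hfin i).1.coe_toFinset]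
    exact (hfin i).2
  set F : Finset (Fin N → Pt d) := Fintype.piFinset t with hF
  set T : (Fin N → Pt d) → Pt d := fun y => ∑ i, l i • y i with hT
  set cr : (Fin N → Pt d) → ℝ := fun y => ∑ i, l i * ‖T y - y i‖ ^ 2 with hcr
  have hcr0 : ∀ y, 0 ≤ cr y := fun y =>
    Finset.sum_nonneg fun i _ => mul_nonneg (hl0 i) (sq_nonneg _)
  have hcE : ∀ y, ∑ i, ENNReal.ofReal (l i) * ENNReal.ofReal (‖T y - y i‖ ^ 2)
      = ENNReal.ofReal (cr y) := by
    intro y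
    rw [hcr, ENNReal.ofReal_sum_of_nonneg (fun i _ => mul_nonneg (hl0 i) (sq_nonneg _))]
    exact Finset.sum_congr rfl fun i _ => (ENNReal.ofReal_mul (hl0 i)).symm
  have hmeas_f : Measurable fun p : Pt d × Pt d => ENNReal.ofReal (‖p.1 - p.2‖ ^ 2) :=
    (((continuous_fst.sub continuous_snd).norm.pow 2).measurable).ennreal_ofReal
  -- mass of supports
  have hone : ∀ j, ∑ u ∈ t j, Pm j {u} = 1 := by
    intro j
    rw [sum_singleton_meas]
    have h := measure_add_measure_compl (μ := Pm j) (finset_meas (t j))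
    rw [ht0 j, add_zero, measure_univ] at h
    exact h
  have honeR : ∀ j, ∑ u ∈ t j, (Pm j {u}).toReal = 1 := by
    intro j
    rw [← ENNReal.toReal_sum (fun u _ => measure_ne_top _ _), hone j, ENNReal.toReal_one]
  -- the centroid set as a finset
  have hS : centroidSet l Pm = ↑(F.image T) := by
    ext z
    simp only [centroidSet, Set.mem_setOf_eq, Finset.coe_image, Set.mem_image, Finset.mem_coe,
      hF, Fintype.mem_piFinset]
    constructor
    · rintro ⟨x, hx, rfl⟩
      exact ⟨x, fun i => (htmem i (x i)).mpr (hx i), rfl⟩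
    · rintro ⟨x, hx, rfl⟩
      exact ⟨x, fun i => (htmem i (x i)).mp (hx i), rfl⟩
  -- the feasible set
  set K : Set (↥F → ℝ) := {v | (∀ y, 0 ≤ v y) ∧ ∀ i, ∀ s ∈ t i,
      ∑ y ∈ Finset.univ.filter (fun y : ↥F => (y : Fin N → Pt d) i = s), v y
        = (Pm i {s}).toReal} with hK
  have hKcl : IsClosed K := by
    have hKeq : K = (⋂ y, {v : ↥F → ℝ | 0 ≤ v y}) ∩
        ⋂ i, ⋂ s, ⋂ (_ : s ∈ t i), {v : ↥F → ℝ |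
          ∑ y ∈ Finset.univ.filter (fun y : ↥F => (y : Fin N → Pt d) i = s), v y
            = (Pm i {s}).toReal} := by
      ext v
      simp only [hK, Set.mem_setOf_eq, Set.mem_inter_iff, Set.mem_iInter]
    rw [hKeq]
    refine IsClosed.inter (isClosed_iInter fun y => isClosed_le continuous_const
      (continuous_apply y)) ?_
    refine isClosed_iInter fun i => isClosed_iInter fun s => isClosed_iInter fun _ => ?_
    exact isClosed_eq (continuous_finset_sum _ fun y _ => continuous_apply y) continuous_const
  have hKne : K.Nonempty := by
    refine ⟨fun y => ∏ j, (Pm j {(y : Fin N → Pt d) j}).toReal, ?_, ?_⟩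
    · exact fun y => Finset.prod_nonneg fun j _ => ENNReal.toReal_nonneg
    · intro i s hs
      rw [sum_subtype_filter F (fun y => y i = s)
        (fun y => ∏ j, (Pm j {y j}).toReal)]
      exact sum_filter_piFinset t (fun j u => (Pm j {u}).toReal) i s hs honeR
  have hKbd : ∀ v ∈ K, ∀ y, |v y| ≤ 1 := by
    intro v hv y
    rw [abs_of_nonneg (hv.1 y)]
    have hy0 : (y : Fin N → Pt d) i0 ∈ t i0 := (Fintype.mem_piFinset.mp y.2) i0
    have h1 : v y ≤ ∑ z ∈ Finset.univ.filter
        (fun z : ↥F => (z : Fin N → Pt d) i0 = (y : Fin N → Pt d) i0), v z :=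
      Finset.single_le_sum (fun z _ => hv.1 z) (by simp)
    rw [hv.2 i0 _ hy0] at h1
    refine h1.trans ?_
    have := ENNReal.toReal_mono (a := Pm i0 {(y : Fin N → Pt d) i0}) ENNReal.one_ne_top
      prob_le_one
    simpa using this
  obtain ⟨v, hvK, hvmin⟩ := exists_LP_min K hKne hKcl hKbd (fun y => cr ↑y)
  -- total mass one
  have hv1 : ∑ y : ↥F, v y = 1 := by
    rw [← Finset.sum_fiberwise_of_maps_to (t := t i0)
      (g := fun y : ↥F => (y : Fin N → Pt d) i0)
      (fun y _ => (Fintype.mem_piFinset.mp y.2) i0) v]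
    rw [Finset.sum_congr rfl (fun s hs => hvK.2 i0 s hs)]
    exact honeR i0
  -- the candidate barycenter
  set P : Measure (Pt d) := ∑ y : ↥F, ENNReal.ofReal (v y) • Measure.dirac (T ↑y) with hP
  have hPprob : IsProbabilityMeasure P := by
    constructor
    rw [hP, Measure.finset_sum_apply]
    have : ∀ y : ↥F, (ENNReal.ofReal (v y) • Measure.dirac (T ↑y)) Set.univ
        = ENNReal.ofReal (v y) := by
      intro y; rw [Measure.smul_apply, measure_univ, smul_eq_mul, mul_one]
    rw [Finset.sum_congr rfl fun y _ => this y,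
      ← ENNReal.ofReal_sum_of_nonneg (fun y _ => hvK.1 y), hv1, ENNReal.ofReal_one]
  have hPsupp : P (centroidSet l Pm)ᶜ = 0 := by
    rw [hS, hP, Measure.finset_sum_apply]
    refine Finset.sum_eq_zero fun y _ => ?_
    rw [Measure.smul_apply, Measure.dirac_apply' _ (finset_meas (F.image T)).compl]
    have hmem : T ↑y ∈ (↑(F.image T) : Set (Pt d)) := by
      simp only [Finset.coe_image, Set.mem_image, Finset.mem_coe]
      exact ⟨↑y, y.2, rfl⟩
    have hnot : T ↑y ∉ (↑(F.image T) : Set (Pt d))ᶜ := fun h => h hmem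
    rw [Set.indicator_of_notMem hnot, smul_zero]
  -- upper bound : phi P ≤ ofReal (∑ v * cr)
  have hub : phi l Pm P ≤ ENNReal.ofReal (∑ y : ↥F, v y * cr ↑y) := by
    have hcoup : ∀ i : Fin N, W2sq P (Pm i)
        ≤ ∑ y : ↥F, ENNReal.ofReal (v y)
          * ENNReal.ofReal (‖T ↑y - (↑y : Fin N → Pt d) i‖ ^ 2) := by
      intro i
      set γ : Measure (Pt d × Pt d) := ∑ y : ↥F,
        ENNReal.ofReal (v y) • Measure.dirac (T ↑y, (↑y : Fin N → Pt d) i) with hγ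
      have hmem1 : γ.map Prod.fst = P := by
        ext A hA
        rw [Measure.map_apply measurable_fst hA, hγ, hP, Measure.finset_sum_apply,
          Measure.finset_sum_apply]
        refine Finset.sum_congr rfl fun y _ => ?_
        rw [Measure.smul_apply, Measure.smul_apply,
          Measure.dirac_apply' _ (measurable_fst hA), Measure.dirac_apply' _ hA]
        congr 1
      have hmem2 : γ.map Prod.snd = Pm i := by
        conv_rhs => rw [discrete_repr (Pm i) (t i) (ht0 i)]
        ext A hA
        rw [Measure.map_apply measurable_snd hA, hγ, Measure.finset_sum_apply,
          Measure.finset_sum_apply]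
        have hterm : ∀ y : ↥F, (ENNReal.ofReal (v y)
            • Measure.dirac (T ↑y, (↑y : Fin N → Pt d) i)) (Prod.snd ⁻¹' A)
            = ENNReal.ofReal (v y) * Measure.dirac ((↑y : Fin N → Pt d) i) A := by
          intro y
          rw [Measure.smul_apply, Measure.dirac_apply' _ (measurable_snd hA),
            Measure.dirac_apply' _ hA, smul_eq_mul]
          congr 1
        rw [Finset.sum_congr rfl fun y _ => hterm y]
        rw [← Finset.sum_fiberwise_of_maps_to (t := t i)
          (g := fun y : ↥F => (y : Fin N → Pt d) i)
          (fun y _ => (Fintype.mem_piFinset.mp y.2) i)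
          (fun y => ENNReal.ofReal (v y) * Measure.dirac ((↑y : Fin N → Pt d) i) A)]
        refine Finset.sum_congr rfl fun s hs => ?_
        have hcongr : ∀ y ∈ Finset.univ.filter (fun y : ↥F => (y : Fin N → Pt d) i = s),
            ENNReal.ofReal (v y) * Measure.dirac ((↑y : Fin N → Pt d) i) A
            = ENNReal.ofReal (v y) * Measure.dirac s A := by
          intro y hy
          rw [(Finset.mem_filter.mp hy).2]
        rw [Finset.sum_congr rfl hcongr, ← Finset.sum_mul]
        have hsum2 : ∑ y ∈ Finset.univ.filter (fun y : ↥F => (y : Fin N → Pt d) i = s),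
            ENNReal.ofReal (v y) = Pm i {s} := by
          rw [← ENNReal.ofReal_sum_of_nonneg (fun y _ => hvK.1 y), hvK.2 i s hs,
            ENNReal.ofReal_toReal (measure_ne_top _ _)]
        rw [hsum2, Measure.smul_apply, smul_eq_mul]
      have hcost : ∫⁻ p, ENNReal.ofReal (‖p.1 - p.2‖ ^ 2) ∂γ
          = ∑ y : ↥F, ENNReal.ofReal (v y)
            * ENNReal.ofReal (‖T ↑y - (↑y : Fin N → Pt d) i‖ ^ 2) := by
        rw [hγ, lintegral_finset_sum_measure]
        refine Finset.sum_congr rfl fun y _ => ?_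
        rw [lintegral_smul_measure, lintegral_dirac' _ hmeas_f, smul_eq_mul]
      calc W2sq P (Pm i) ≤ ∫⁻ p, ENNReal.ofReal (‖p.1 - p.2‖ ^ 2) ∂γ := by
            rw [W2sq]
            exact iInf₂_le γ ⟨hmem1, hmem2⟩
        _ = _ := hcost
    calc phi l Pm P = ∑ i, ENNReal.ofReal (l i) * W2sq P (Pm i) := rfl
      _ ≤ ∑ i, ENNReal.ofReal (l i) * ∑ y : ↥F, ENNReal.ofReal (v y)
            * ENNReal.ofReal (‖T ↑y - (↑y : Fin N → Pt d) i‖ ^ 2) :=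
          Finset.sum_le_sum fun i _ => mul_le_mul_right (hcoup i) _
      _ = ∑ y : ↥F, ENNReal.ofReal (v y)
            * ∑ i, ENNReal.ofReal (l i) * ENNReal.ofReal (‖T ↑y - (↑y : Fin N → Pt d) i‖ ^ 2) := by
          simp_rw [Finset.mul_sum]
          rw [Finset.sum_comm]
          exact Finset.sum_congr rfl fun y _ => Finset.sum_congr rfl fun i _ => by ring
      _ = ENNReal.ofReal (∑ y : ↥F, v y * cr ↑y) := by
          rw [ENNReal.ofReal_sum_of_nonneg (fun y _ => mul_nonneg (hvK.1 y) (hcr0 _))]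
          refine Finset.sum_congr rfl fun y _ => ?_
          rw [ENNReal.ofReal_mul (hvK.1 y), hcE]
  -- lower bound : for every probability Q, ofReal (∑ v * cr) ≤ phi Q
  have hlb : ∀ Q : Measure (Pt d), IsProbabilityMeasure Q →
      ENNReal.ofReal (∑ y : ↥F, v y * cr ↑y) ≤ phi l Pm Q := by
    intro Q hQ
    by_cases htop : phi l Pm Q = ⊤
    · rw [htop]; exact le_top
    have hW : ∀ i, W2sq Q (Pm i) ≠ ⊤ := by
      intro i hWi
      refine htop (ENNReal.sum_eq_top.mpr ⟨i, Finset.mem_univ i, ?_⟩)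
      rw [hWi, ENNReal.mul_top]
      simp only [ne_eq, ENNReal.ofReal_eq_zero, not_le]
      exact hl i
    apply ENNReal.le_of_forall_pos_le_add
    intro ε hε _
    have hεpos : (ε : ℝ≥0∞) ≠ 0 := by exact_mod_cast hε.ne'
    -- choose near-optimal couplings
    have hch : ∀ i, ∃ π : Measure (Pt d × Pt d),
        (π.map Prod.fst = Q ∧ π.map Prod.snd = Pm i) ∧
        ∫⁻ p, ENNReal.ofReal (‖p.1 - p.2‖ ^ 2) ∂π < W2sq Q (Pm i) + ε := by
      intro i
      set b : ℝ≥0∞ := W2sq Q (Pm i) + ε with hb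
      have hlt : W2sq Q (Pm i) < b := ENNReal.lt_add_right (hW i) hεpos
      rw [W2sq, iInf_lt_iff] at hlt
      obtain ⟨π, hπ⟩ := hlt
      rw [iInf_lt_iff] at hπ
      obtain ⟨hmem, hπ⟩ := hπ
      exact ⟨π, hmem, hπ⟩
    choose π hπmem hπcost using hch
    obtain ⟨w, hwle, hwcons, hwcost⟩ := glue_bound l hl0 hsum Pm t ht0 Q π
      (fun i => (hπmem i).1) (fun i => (hπmem i).2)
      (fun y x => by
        have := centroid_min_ennreal l hl0 hsum y x
        exact this)
    set v' : ↥F → ℝ := fun y => (w ↑y).toReal with hv'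
    have hv'K : v' ∈ K := by
      constructor
      · exact fun y => ENNReal.toReal_nonneg
      · intro i s hs
        rw [sum_subtype_filter F (fun y => y i = s) (fun y => (w y).toReal)]
        rw [← ENNReal.toReal_sum (fun y _ => ((hwle y).trans_lt ENNReal.one_lt_top).ne)]
        rw [hwcons i s hs]
    have hkey : ENNReal.ofReal (∑ y : ↥F, v' y * cr ↑y)
        = ∑ y ∈ F, w y * ENNReal.ofReal (cr y) := by
      rw [ENNReal.ofReal_sum_of_nonneg (fun y _ => mul_nonneg ENNReal.toReal_nonneg (hcr0 _))]
      rw [← Finset.sum_coe_sort F (fun y => w y * ENNReal.ofReal (cr y))]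
      refine Finset.sum_congr rfl fun y _ => ?_
      rw [ENNReal.ofReal_mul ENNReal.toReal_nonneg,
        ENNReal.ofReal_toReal ((hwle ↑y).trans_lt ENNReal.one_lt_top).ne]
    calc ENNReal.ofReal (∑ y : ↥F, v y * cr ↑y)
        ≤ ENNReal.ofReal (∑ y : ↥F, v' y * cr ↑y) :=
          ENNReal.ofReal_le_ofReal (hvmin v' hv'K)
      _ = ∑ y ∈ F, w y * ENNReal.ofReal (cr y) := hkey
      _ ≤ ∑ i, ENNReal.ofReal (l i) * ∫⁻ p, ENNReal.ofReal (‖p.1 - p.2‖ ^ 2) ∂(π i) := by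
          refine le_trans (le_of_eq ?_) hwcost
          refine Finset.sum_congr rfl fun y _ => ?_
          rw [← hcE y]
      _ ≤ ∑ i, ENNReal.ofReal (l i) * (W2sq Q (Pm i) + ε) :=
          Finset.sum_le_sum fun i _ => mul_le_mul_right (hπcost i).le _
      _ = phi l Pm Q + ε := by
          simp_rw [mul_add]
          rw [Finset.sum_add_distrib, ← Finset.sum_mul,
            ← ENNReal.ofReal_sum_of_nonneg (fun i _ => hl0 i), hsum, ENNReal.ofReal_one, one_mul]
          rfl
  exact ⟨P, hPprob, hPsupp, fun Q hQ => (hub.trans (hlb Q hQ))⟩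

/-- the infimum of φ is attained by a measure supported in the
finite set S of weighted centroids; in particular a barycenter exists and the
infimum over measures supported in S equals the infimum over all measures. -/
theorem barycenter_exists_supported_in_centroidSet {d N : ℕ}
    (l : Fin N → ℝ) (Pm : Fin N → Measure (Pt d))
    (hl : ∀ i, 0 < l i) (hsum : ∑ i, l i = 1)
    (hprob : ∀ i, IsProbabilityMeasure (Pm i))
    (hfin : ∀ i, FinitelySupported (Pm i)) :
    (∃ P : Measure (Pt d), IsProbabilityMeasure P ∧ P (centroidSet l Pm)ᶜ = 0 ∧
        ∀ Q : Measure (Pt d), IsProbabilityMeasure Q → FiniteSecondMoment Q →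
          phi l Pm P ≤ phi l Pm Q) ∧
      (⨅ P ∈ {P : Measure (Pt d) | IsProbabilityMeasure P ∧ P (centroidSet l Pm)ᶜ = 0},
          phi l Pm P) =
        ⨅ P ∈ {P : Measure (Pt d) | IsProbabilityMeasure P ∧ FiniteSecondMoment P},
          phi l Pm P := by
  classical
  obtain ⟨P, hPprob, hPsupp, hPmin⟩ := exists_min_measure l Pm hl hsum hprob hfin
  have hSfin : (centroidSet l Pm).Finite := by
    have h1 : centroidSet l Pm ⊆ (fun x : Fin N → Pt d => ∑ i, l i • x i) ''
        (Set.univ.pi fun i => msupp (Pm i)) := by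
      rintro z ⟨x, hx, rfl⟩
      exact ⟨x, fun i _ => hx i, rfl⟩
    exact ((Set.Finite.pi fun i => (hfin i).1).image _).subset h1
  have hfsm : ∀ P' : Measure (Pt d), IsProbabilityMeasure P' →
      P' (centroidSet l Pm)ᶜ = 0 → FiniteSecondMoment P' := by
    intro P' h1 h2
    haveI := h1
    exact fsm_of_supported P' hSfin.toFinset (by rwa [Set.Finite.coe_toFinset])
  refine ⟨⟨P, hPprob, hPsupp, fun Q hQ _ => hPmin Q hQ⟩, le_antisymm ?_ ?_⟩
  · refine le_iInf₂ fun Q hQ => ?_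
    have h1 : (⨅ P' ∈ {P' : Measure (Pt d) | IsProbabilityMeasure P' ∧
        P' (centroidSet l Pm)ᶜ = 0}, phi l Pm P') ≤ phi l Pm P :=
      iInf₂_le P ⟨hPprob, hPsupp⟩
    exact h1.trans (hPmin Q hQ.1)
  · refine le_iInf₂ fun P' hP' => ?_
    exact iInf₂_le P' ⟨hP'.1, hfsm P' hP'.1 hP'.2⟩
end

section
/- Let P_1, …, P_N be discrete probability measures on ℝ^d and λ_1, …, λ_N > 0 with ∑_{i=1}^N λ_i = 1. Then every barycenter P̄ of P_1, …, P_N is supported in the finite set S = {∑_{i=1}^N λ_i x_i : x_i ∈ supp(P_i)} of weighted centroids of combinations of support points, one from each measure; in particular every barycenter has finite support. -/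
open MeasureTheory ENNReal

private lemma costy_meas {d : ℕ} (y : Pt d) :
    Measurable fun x : Pt d => ENNReal.ofReal (‖x - y‖ ^ 2) := by
  apply ENNReal.measurable_ofReal.comp
  exact ((continuous_id.sub continuous_const).norm.pow 2).measurable

private lemma cost_meas {d : ℕ} :
    Measurable fun p : Pt d × Pt d => ENNReal.ofReal (‖p.1 - p.2‖ ^ 2) := by
  apply ENNReal.measurable_ofReal.comp
  exact (((continuous_fst.sub continuous_snd)).norm.pow 2).measurable

private lemma normsq_meas {d : ℕ} :
    Measurable fun x : Pt d => ENNReal.ofReal (‖x‖ ^ 2) := by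
  apply ENNReal.measurable_ofReal.comp
  exact (continuous_norm.pow 2).measurable

private lemma lintegral_fs {α : Type*} [MeasurableSpace α] [MeasurableSingletonClass α]
    (P : Measure α) [IsFiniteMeasure P] (hP : FinitelySupported P) (f : α → ℝ≥0∞)
    (hf : ∀ x, f x ≠ ⊤) : ∫⁻ x, f x ∂P < ⊤ := by
  have hA : MeasurableSet (msupp P) := hP.1.measurableSet
  rw [← lintegral_add_compl f hA, setLIntegral_measure_zero _ _ hP.2, add_zero]
  set C := hP.1.toFinset.sup f with hC
  have hCt : C ≠ ⊤ := by
    rw [hC, ← lt_top_iff_ne_top, Finset.sup_lt_iff (by simp)]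
    exact fun x _ => lt_top_iff_ne_top.2 (hf x)
  calc ∫⁻ x in msupp P, f x ∂P ≤ ∫⁻ _ in msupp P, C ∂P := by
        apply setLIntegral_mono' hA
        intro x hx
        exact Finset.le_sup (by simpa using hx)
    _ = C * P (msupp P) := setLIntegral_const _ _
    _ < ⊤ := ENNReal.mul_lt_top (lt_top_iff_ne_top.2 hCt) (measure_lt_top P _)

private lemma pythag {d N : ℕ} (l : Fin N → ℝ) (hl : ∀ i, 0 ≤ l i) (hsum : ∑ i, l i = 1)
    (y : Fin N → Pt d) (x : Pt d) :
    ∑ i, ENNReal.ofReal (l i) * ENNReal.ofReal (‖x - y i‖ ^ 2)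
      = ENNReal.ofReal (‖x - ∑ i, l i • y i‖ ^ 2)
        + ∑ i, ENNReal.ofReal (l i) * ENNReal.ofReal (‖(∑ j, l j • y j) - y i‖ ^ 2) := by
  set m : Pt d := ∑ i, l i • y i with hm
  have key : ∑ i, l i * ‖x - y i‖ ^ 2 = ‖x - m‖ ^ 2 + ∑ i, l i * ‖m - y i‖ ^ 2 := by
    have hexp : ∀ i : Fin N, ‖x - y i‖ ^ 2
        = ‖x - m‖ ^ 2 + 2 * inner ℝ (x - m) (m - y i) + ‖m - y i‖ ^ 2 := by
      intro i
      have := norm_add_sq_real (x - m) (m - y i)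
      rwa [sub_add_sub_cancel] at this
    have hzero : ∑ i, l i • (m - y i) = 0 := by
      rw [Finset.sum_congr rfl (fun i _ => smul_sub (l i) m (y i)), Finset.sum_sub_distrib,
        ← Finset.sum_smul, hsum, one_smul, hm, sub_self]
    have hcross : ∑ i, l i * (2 * inner ℝ (x - m) (m - y i)) = 0 := by
      have : ∑ i, l i * (2 * inner ℝ (x - m) (m - y i))
          = 2 * inner ℝ (x - m) (∑ i, l i • (m - y i)) := by
        rw [inner_sum, Finset.mul_sum]
        refine Finset.sum_congr rfl fun i _ => ?_
        rw [real_inner_smul_right]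
        ring
      rw [this, hzero, inner_zero_right, mul_zero]
    calc ∑ i, l i * ‖x - y i‖ ^ 2
        = ∑ i, (l i * ‖x - m‖ ^ 2 + (l i * (2 * inner ℝ (x - m) (m - y i))
            + l i * ‖m - y i‖ ^ 2)) := by
          refine Finset.sum_congr rfl fun i _ => ?_
          rw [hexp i]; ring
      _ = (∑ i, l i * ‖x - m‖ ^ 2) + ((∑ i, l i * (2 * inner ℝ (x - m) (m - y i)))
            + ∑ i, l i * ‖m - y i‖ ^ 2) := by
          rw [Finset.sum_add_distrib, Finset.sum_add_distrib]
      _ = ‖x - m‖ ^ 2 + ∑ i, l i * ‖m - y i‖ ^ 2 := by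
          rw [← Finset.sum_mul, hsum, one_mul, hcross, zero_add]
  have h1 : ∀ (z : Pt d), ∑ i, ENNReal.ofReal (l i) * ENNReal.ofReal (‖z - y i‖ ^ 2)
      = ENNReal.ofReal (∑ i, l i * ‖z - y i‖ ^ 2) := by
    intro z
    rw [ENNReal.ofReal_sum_of_nonneg (fun i _ => mul_nonneg (hl i) (sq_nonneg _))]
    exact Finset.sum_congr rfl fun i _ => (ENNReal.ofReal_mul (hl i)).symm
  rw [h1 x, h1 m, key, ENNReal.ofReal_add (sq_nonneg _)
    (Finset.sum_nonneg fun i _ => mul_nonneg (hl i) (sq_nonneg _))]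

private lemma withDensity_finsum {α ι : Type*} [MeasurableSpace α] (μ : Measure α)
    (s : Finset ι) (f : ι → α → ℝ≥0∞) (hf : ∀ i ∈ s, Measurable (f i)) :
    μ.withDensity (fun x => ∑ i ∈ s, f i x) = ∑ i ∈ s, μ.withDensity (f i) := by
  classical
  induction s using Finset.induction_on with
  | empty => simp
  | @insert a s' ha ih =>
    rw [Finset.sum_insert ha]
    have : (fun x => ∑ i ∈ insert a s', f i x)
        = fun x => f a x + ∑ i ∈ s', f i x := by
      funext x; rw [Finset.sum_insert ha]
    rw [this, show (fun x => f a x + ∑ i ∈ s', f i x)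
        = f a + fun x => ∑ i ∈ s', f i x from rfl]
    rw [withDensity_add_left (hf a (Finset.mem_insert_self a s'))]
    rw [ih (fun i hi => hf i (Finset.mem_insert_of_mem hi))]

private lemma coupling_decomp {d : ℕ} (Pb Pi : Measure (Pt d)) [IsProbabilityMeasure Pb]
    (F : Finset (Pt d)) (hF : Pi ((↑F : Set (Pt d))ᶜ) = 0)
    (π : Measure (Pt d × Pt d)) (h1 : π.map Prod.fst = Pb) (h2 : π.map Prod.snd = Pi) :
    ∃ f : Pt d → Pt d → ℝ≥0∞, (∀ y, Measurable (f y)) ∧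
      ((fun x => ∑ y ∈ F, f y x) =ᵐ[Pb] fun _ => 1) ∧
      (∀ y ∈ F, (Pb.withDensity (f y)) Set.univ = Pi {y}) ∧
      (∫⁻ p, ENNReal.ofReal (‖p.1 - p.2‖ ^ 2) ∂π
        = ∑ y ∈ F, ∫⁻ x, ENNReal.ofReal (‖x - y‖ ^ 2) ∂(Pb.withDensity (f y))) := by
  classical
  have hπuniv : π Set.univ = 1 := by
    calc π Set.univ = π (Prod.fst ⁻¹' Set.univ) := by simp
      _ = (π.map Prod.fst) Set.univ := (Measure.map_apply measurable_fst MeasurableSet.univ).symm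
      _ = 1 := by rw [h1]; exact measure_univ
  haveI : IsFiniteMeasure π := ⟨by rw [hπuniv]; exact one_lt_top⟩
  set E : Pt d → Set (Pt d × Pt d) := fun y => Prod.snd ⁻¹' ({y} : Set (Pt d)) with hE
  have hEm : ∀ y, MeasurableSet (E y) := fun y => measurable_snd (measurableSet_singleton y)
  set μ : Pt d → Measure (Pt d) := fun y => (π.restrict (E y)).map Prod.fst with hμ
  have hμapp : ∀ y (s : Set (Pt d)), MeasurableSet s → μ y s = π (Prod.fst ⁻¹' s ∩ E y) := by
    intro y s hs
    rw [hμ, Measure.map_apply measurable_fst hs, Measure.restrict_apply (measurable_fst hs)]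
  have hμle : ∀ y, μ y ≤ Pb := by
    intro y
    refine Measure.le_iff.2 fun s hs => ?_
    rw [hμapp y s hs, ← h1, Measure.map_apply measurable_fst hs]
    exact measure_mono Set.inter_subset_left
  have hμfin : ∀ y, IsFiniteMeasure (μ y) := by
    intro y
    refine ⟨lt_of_le_of_lt ?_ (measure_lt_top π (Prod.fst ⁻¹' Set.univ ∩ E y))⟩
    rw [hμapp y _ MeasurableSet.univ]
  set f : Pt d → Pt d → ℝ≥0∞ := fun y => (μ y).rnDeriv Pb with hf
  have hfm : ∀ y, Measurable (f y) := fun y => Measure.measurable_rnDeriv _ _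
  have hwd : ∀ y, Pb.withDensity (f y) = μ y := by
    intro y
    haveI := hμfin y
    exact Measure.withDensity_rnDeriv_eq _ _ (Measure.absolutelyContinuous_of_le (hμle y))
  have hEdisj : (↑F : Set (Pt d)).PairwiseDisjoint E := by
    intro a _ b _ hab
    refine Set.disjoint_left.2 fun p hpa hpb => hab ?_
    have h1' : p.2 = a := hpa
    have h2' : p.2 = b := hpb
    rw [← h1', h2']
  have hμuniv : ∀ y ∈ F, (Pb.withDensity (f y)) Set.univ = Pi {y} := by
    intro y _
    rw [hwd y, hμapp y _ MeasurableSet.univ]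
    have : Prod.fst ⁻¹' (Set.univ : Set (Pt d)) ∩ E y = E y := by simp
    rw [this, ← h2, Measure.map_apply measurable_snd (measurableSet_singleton y)]
  have hsumμ : ∑ y ∈ F, μ y = Pb := by
    ext s hs
    rw [Measure.coe_finset_sum, Finset.sum_apply]
    have : ∑ y ∈ F, μ y s = π (⋃ y ∈ F, Prod.fst ⁻¹' s ∩ E y) := by
      rw [measure_biUnion_finset (hEdisj.mono_on ?_) (fun b _ => (measurable_fst hs).inter (hEm b))]
      · exact (Finset.sum_congr rfl fun y hy => hμapp y s hs)
      · intro y _; exact Set.inter_subset_right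
    rw [this]
    have hU : (⋃ y ∈ F, Prod.fst ⁻¹' s ∩ E y)
        = Prod.fst ⁻¹' s ∩ Prod.snd ⁻¹' (↑F : Set (Pt d)) := by
      rw [← Set.inter_iUnion₂]
      congr 1
      rw [hE]
      conv_rhs => rw [← Set.biUnion_of_singleton (↑F : Set (Pt d))]
      simp [Set.preimage_iUnion₂]
    rw [hU, measure_inter_conull ?_, ← h1, Measure.map_apply measurable_fst hs]
    rw [← Set.preimage_compl, ← Measure.map_apply measurable_snd F.measurableSet.compl, h2]
    exact hF
  have h1sum : (fun x => ∑ y ∈ F, f y x) =ᵐ[Pb] fun _ => 1 := by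
    have hwds : Pb.withDensity (fun x => ∑ y ∈ F, f y x) = ∑ y ∈ F, Pb.withDensity (f y) :=
      withDensity_finsum Pb F f (fun y _ => hfm y)
    have heq : Pb.withDensity (fun x => ∑ y ∈ F, f y x) = Pb.withDensity (fun _ => 1) := by
      rw [hwds]
      rw [Finset.sum_congr rfl (fun y _ => hwd y), hsumμ]
      have : (fun _ : Pt d => (1 : ℝ≥0∞)) = (1 : Pt d → ℝ≥0∞) := rfl
      rw [this, withDensity_one]
    refine (withDensity_eq_iff ?_ ?_ ?_).1 heq
    · exact (Finset.measurable_sum F (fun y _ => hfm y)).aemeasurable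
    · exact measurable_const.aemeasurable
    · have : ∫⁻ x, ∑ y ∈ F, f y x ∂Pb
          = (Pb.withDensity (fun x => ∑ y ∈ F, f y x)) Set.univ := by
        rw [withDensity_apply _ MeasurableSet.univ, Measure.restrict_univ]
      rw [this, heq, withDensity_apply _ MeasurableSet.univ, Measure.restrict_univ]
      simp
  refine ⟨f, hfm, h1sum, hμuniv, ?_⟩
  have hnull : π ((Prod.snd ⁻¹' (↑F : Set (Pt d)))ᶜ) = 0 := by
    rw [← Set.preimage_compl, ← Measure.map_apply measurable_snd F.measurableSet.compl, h2]
    exact hF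
  calc ∫⁻ p, ENNReal.ofReal (‖p.1 - p.2‖ ^ 2) ∂π
      = ∫⁻ p in Prod.snd ⁻¹' (↑F : Set (Pt d)), ENNReal.ofReal (‖p.1 - p.2‖ ^ 2) ∂π := by
        rw [← lintegral_add_compl (fun p => ENNReal.ofReal (‖p.1 - p.2‖ ^ 2))
          (measurable_snd F.measurableSet), setLIntegral_measure_zero _ _ hnull, add_zero]
    _ = ∑ y ∈ F, ∫⁻ p in E y, ENNReal.ofReal (‖p.1 - p.2‖ ^ 2) ∂π := by
        have : Prod.snd ⁻¹' (↑F : Set (Pt d)) = ⋃ y ∈ F, E y := by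
          conv_lhs => rw [← Set.biUnion_of_singleton (↑F : Set (Pt d))]
          simp [hE, Set.preimage_iUnion₂]
        rw [this, lintegral_biUnion_finset hEdisj (fun b _ => hEm b)]
    _ = ∑ y ∈ F, ∫⁻ x, ENNReal.ofReal (‖x - y‖ ^ 2) ∂(Pb.withDensity (f y)) := by
        refine Finset.sum_congr rfl fun y _ => ?_
        rw [hwd y]
        have hcg : ∫⁻ p in E y, ENNReal.ofReal (‖p.1 - p.2‖ ^ 2) ∂π
            = ∫⁻ p in E y, ENNReal.ofReal (‖p.1 - y‖ ^ 2) ∂π := by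
          refine setLIntegral_congr_fun (hEm y) (fun p hp => ?_)
          have : p.2 = y := hp
          rw [this]
        rw [hcg, hμ]
        rw [lintegral_map (costy_meas y) measurable_fst]


private lemma W2sq_le_cost {d : ℕ} (P Q : Measure (Pt d)) (π : Measure (Pt d × Pt d))
    (h1 : π.map Prod.fst = P) (h2 : π.map Prod.snd = Q) :
    W2sq P Q ≤ ∫⁻ p, ENNReal.ofReal (‖p.1 - p.2‖ ^ 2) ∂π :=
  iInf₂_le π ⟨h1, h2⟩


/-- every barycenter is supported in the finite set S of weighted
centroids of combinations of support points; in particular it has finite support. -/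
theorem barycenter_supported_in_centroidSet {d N : ℕ}
    (l : Fin N → ℝ) (Pm : Fin N → Measure (Pt d))
    (hl : ∀ i, 0 < l i) (hsum : ∑ i, l i = 1)
    (hprob : ∀ i, IsProbabilityMeasure (Pm i))
    (hfin : ∀ i, FinitelySupported (Pm i))
    (Pbar : Measure (Pt d)) (hbar : IsBarycenter l Pm Pbar) :
    Pbar (centroidSet l Pm)ᶜ = 0 ∧ (msupp Pbar).Finite := by
  classical
  obtain ⟨hPbprob, hPbmom, hopt⟩ := hbar
  haveI := hPbprob
  set F : Fin N → Finset (Pt d) := fun i => (hfin i).1.toFinset with hFdef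
  have hFco : ∀ i, (↑(F i) : Set (Pt d)) = msupp (Pm i) := fun i => (hfin i).1.coe_toFinset
  have hFnull : ∀ i, Pm i ((↑(F i) : Set (Pt d))ᶜ) = 0 := fun i => by
    rw [hFco i]; exact (hfin i).2
  set Sig : Finset (Fin N → Pt d) := Fintype.piFinset F with hSig
  set mm : (Fin N → Pt d) → Pt d := fun σ => ∑ i, l i • σ i with hmm
  have hmS : ∀ σ ∈ Sig, mm σ ∈ centroidSet l Pm := by
    intro σ hσ
    refine ⟨σ, fun i => ?_, rfl⟩
    rw [← hFco i]
    exact Fintype.mem_piFinset.1 hσ i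
  set h : Pt d → ℝ≥0∞ := fun x => ⨅ σ : {σ // σ ∈ Sig}, ENNReal.ofReal (‖x - mm ↑σ‖ ^ 2)
    with hh
  have hmeas_h : Measurable h := Measurable.iInf (fun σ => costy_meas _)
  have key : ∀ ε : ℝ≥0∞, 0 < ε → ε ≠ ⊤ → ∫⁻ x, h x ∂Pbar ≤ ε := by
    intro ε hε0 hεt
    have hopt0 : phi l Pm Pbar ≠ ⊤ := by
      have hD0prob : IsProbabilityMeasure (Measure.dirac (0 : Pt d)) := inferInstance
      have hD0mom : FiniteSecondMoment (Measure.dirac (0 : Pt d)) := by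
        rw [FiniteSecondMoment, lintegral_dirac' _ normsq_meas]; simp
      have hphiD : phi l Pm (Measure.dirac 0) ≠ ⊤ := by
        rw [phi]
        refine (ENNReal.sum_lt_top.2 fun i _ => ?_).ne
        haveI := hprob i
        set π0 : Measure (Pt d × Pt d) := (Pm i).map (fun y => ((0 : Pt d), y)) with hπ0
        have hmg : Measurable (fun y : Pt d => ((0 : Pt d), y)) :=
          measurable_const.prodMk measurable_id
        have h1 : π0.map Prod.fst = Measure.dirac 0 := by
          rw [hπ0, Measure.map_map measurable_fst hmg]
          have : (Prod.fst ∘ fun y : Pt d => ((0 : Pt d), y)) = fun _ => (0 : Pt d) := rfl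
          rw [this, Measure.map_const]; simp
        have h2 : π0.map Prod.snd = Pm i := by
          rw [hπ0, Measure.map_map measurable_snd hmg]
          have : (Prod.snd ∘ fun y : Pt d => ((0 : Pt d), y)) = id := rfl
          rw [this, Measure.map_id]
        have hcost : ∫⁻ p, ENNReal.ofReal (‖p.1 - p.2‖ ^ 2) ∂π0
            = ∫⁻ y, ENNReal.ofReal (‖(0 : Pt d) - y‖ ^ 2) ∂(Pm i) := by
          rw [hπ0, lintegral_map cost_meas hmg]
        have hfin2 : W2sq (Measure.dirac 0) (Pm i) < ⊤ :=
          lt_of_le_of_lt (W2sq_le_cost _ _ π0 h1 h2)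
            (by rw [hcost]; exact lintegral_fs (Pm i) (hfin i) _ (fun x => ofReal_ne_top))
        exact ENNReal.mul_lt_top ofReal_lt_top hfin2
      exact ((hopt _ hD0prob hD0mom).trans_lt (lt_top_iff_ne_top.2 hphiD)).ne
    have hW2fin : ∀ i, W2sq Pbar (Pm i) ≠ ⊤ := by
      intro i htop
      have hterm : ENNReal.ofReal (l i) * W2sq Pbar (Pm i) ≤ phi l Pm Pbar := by
        rw [phi]
        exact Finset.single_le_sum (f := fun j => ENNReal.ofReal (l j) * W2sq Pbar (Pm j))
          (fun j _ => zero_le) (Finset.mem_univ i)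
      rw [htop, ENNReal.mul_top (ENNReal.ofReal_pos.2 (hl i)).ne'] at hterm
      exact hopt0 (top_le_iff.1 hterm)
    have hcpl : ∀ i, ∃ π : Measure (Pt d × Pt d), π.map Prod.fst = Pbar ∧
        π.map Prod.snd = Pm i ∧
        ∫⁻ p, ENNReal.ofReal (‖p.1 - p.2‖ ^ 2) ∂π ≤ W2sq Pbar (Pm i) + ε := by
      intro i
      have hlt : W2sq Pbar (Pm i) < W2sq Pbar (Pm i) + ε :=
        ENNReal.lt_add_right (hW2fin i) (hε0.ne')
      have hlt2 : (⨅ π ∈ {π : Measure (Pt d × Pt d) |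
          π.map Prod.fst = Pbar ∧ π.map Prod.snd = Pm i},
          ∫⁻ p, ENNReal.ofReal (‖p.1 - p.2‖ ^ 2) ∂π) < W2sq Pbar (Pm i) + ε := hlt
      obtain ⟨π, hπ⟩ := iInf_lt_iff.1 hlt2
      obtain ⟨hmem, hcost⟩ := iInf_lt_iff.1 hπ
      exact ⟨π, hmem.1, hmem.2, hcost.le⟩
    choose π hπ1 hπ2 hπ3 using hcpl
    choose f hfm hfsum hfuniv hfcost using fun i =>
      coupling_decomp Pbar (Pm i) (F i) (hFnull i) (π i) (hπ1 i) (hπ2 i)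
    set g : (Fin N → Pt d) → Pt d → ℝ≥0∞ := fun σ x => ∏ j, f j (σ j) x with hg
    have hgm : ∀ σ, Measurable (g σ) :=
      fun σ => Finset.measurable_prod _ (fun j _ => hfm j (σ j))
    set ν : (Fin N → Pt d) → Measure (Pt d) := fun σ => Pbar.withDensity (g σ) with hν
    set w : (Fin N → Pt d) → ℝ≥0∞ := fun σ => ν σ Set.univ with hw
    have hEae : ∀ᵐ x ∂Pbar, ∀ i, ∑ y ∈ F i, f i y x = 1 := ae_all_iff.2 fun i => hfsum i
    have hgsum : (fun x => ∑ σ ∈ Sig, g σ x) =ᵐ[Pbar] fun _ => 1 := by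
      refine hEae.mono fun x hx => ?_
      simp only [hg, hSig]
      have hps := Finset.prod_univ_sum F (fun j z => f j z x)
      rw [← hps, Finset.prod_congr rfl (fun i _ => hx i), Finset.prod_const_one]
    have hνsum : ∑ σ ∈ Sig, ν σ = Pbar := by
      simp only [hν]
      rw [← withDensity_finsum Pbar Sig g (fun σ _ => hgm σ), withDensity_congr_ae hgsum]
      have : (fun _ : Pt d => (1 : ℝ≥0∞)) = 1 := rfl
      rw [this, withDensity_one]
    have hwsum : ∑ σ ∈ Sig, w σ = 1 := by
      have h' := congrArg (fun m : Measure (Pt d) => m Set.univ) hνsum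
      simpa [Measure.coe_finset_sum, Finset.sum_apply, hw] using h'
    have hfiber : ∀ (i : Fin N) (G : (Fin N → Pt d) → ℝ≥0∞),
        ∑ σ ∈ Sig, G σ = ∑ y ∈ F i, ∑ σ ∈ Sig.filter (fun σ => σ i = y), G σ :=
      fun i G => (Finset.sum_fiberwise_of_maps_to
        (fun σ hσ => Fintype.mem_piFinset.1 hσ i) G).symm
    have hfilter_g : ∀ (i : Fin N), ∀ y ∈ F i,
        (fun x => ∑ σ ∈ Sig.filter (fun σ => σ i = y), g σ x) =ᵐ[Pbar] f i y := by
      intro i y hy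
      refine hEae.mono fun x hx => ?_
      have hset : Sig.filter (fun σ => σ i = y) = Fintype.piFinset (Function.update F i {y}) := by
        ext σ
        simp only [Finset.mem_filter, hSig, Fintype.mem_piFinset]
        constructor
        · rintro ⟨hall, hiy⟩ j
          rcases eq_or_ne j i with rfl | hj
          · simp [Function.update_self, hiy]
          · simpa [Function.update_of_ne hj] using hall j
        · intro hall
          have hi := hall i
          rw [Function.update_self] at hi
          have hiy : σ i = y := by simpa using hi
          refine ⟨fun j => ?_, hiy⟩
          rcases eq_or_ne j i with rfl | hj
          · rw [hiy]; exact hy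
          · have hj2 := hall j; rwa [Function.update_of_ne hj] at hj2
      show (∑ σ ∈ Sig.filter (fun σ => σ i = y), g σ x) = f i y x
      rw [hset]
      simp only [hg]
      have hps := Finset.prod_univ_sum (Function.update F i {y}) (fun j z => f j z x)
      rw [← hps, Fintype.prod_eq_mul_prod_compl i]
      have h1 : ∑ z ∈ Function.update F i ({y} : Finset (Pt d)) i, f i z x = f i y x := by
        rw [Function.update_self]; simp
      have h2 : ∏ j ∈ ({i}ᶜ : Finset (Fin N)), (∑ z ∈ Function.update F i {y} j, f j z x)
          = 1 := by
        refine Finset.prod_eq_one fun j hj => ?_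
        have hj' : j ≠ i := by simpa using hj
        rw [Function.update_of_ne hj']
        exact hx j
      rw [h1, h2, mul_one]
    have hνfilter : ∀ (i : Fin N), ∀ y ∈ F i,
        ∑ σ ∈ Sig.filter (fun σ => σ i = y), ν σ = Pbar.withDensity (f i y) := by
      intro i y hy
      simp only [hν]
      rw [← withDensity_finsum Pbar _ g (fun σ _ => hgm σ)]
      exact withDensity_congr_ae (hfilter_g i y hy)
    have hwfilter : ∀ (i : Fin N), ∀ y ∈ F i,
        ∑ σ ∈ Sig.filter (fun σ => σ i = y), w σ = Pm i {y} := by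
      intro i y hy
      have h' := congrArg (fun m : Measure (Pt d) => m Set.univ) (hνfilter i y hy)
      simp only [Measure.coe_finset_sum, Finset.sum_apply] at h'
      rw [hw]
      rw [show (∑ σ ∈ Sig.filter (fun σ => σ i = y), ν σ Set.univ) = Pm i {y} from
        h'.trans (hfuniv i y hy)]
    have hcosti : ∀ i, ∫⁻ p, ENNReal.ofReal (‖p.1 - p.2‖ ^ 2) ∂(π i)
        = ∑ σ ∈ Sig, ∫⁻ x, ENNReal.ofReal (‖x - σ i‖ ^ 2) ∂(ν σ) := by
      intro i
      rw [hfcost i, hfiber i (fun σ => ∫⁻ x, ENNReal.ofReal (‖x - σ i‖ ^ 2) ∂(ν σ))]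
      refine Finset.sum_congr rfl fun y hy => ?_
      rw [← hνfilter i y hy, lintegral_finset_sum_measure]
      refine Finset.sum_congr rfl fun σ hσ => ?_
      rw [(Finset.mem_filter.1 hσ).2]
    set K : (Fin N → Pt d) → ℝ≥0∞ :=
      fun σ => ∑ i, ENNReal.ofReal (l i) * ENNReal.ofReal (‖mm σ - σ i‖ ^ 2) with hK
    set R : ℝ≥0∞ := ∑ σ ∈ Sig, ∫⁻ x, ENNReal.ofReal (‖x - mm σ‖ ^ 2) ∂(ν σ) with hR
    set T : ℝ≥0∞ := ∑ σ ∈ Sig, K σ * w σ with hT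
    have hAeq : ∑ i, ENNReal.ofReal (l i) * ∫⁻ p, ENNReal.ofReal (‖p.1 - p.2‖ ^ 2) ∂(π i)
        = R + T := by
      have e1 : ∀ σ, ∑ i, ENNReal.ofReal (l i) * ∫⁻ x, ENNReal.ofReal (‖x - σ i‖ ^ 2) ∂(ν σ)
          = (∫⁻ x, ENNReal.ofReal (‖x - mm σ‖ ^ 2) ∂(ν σ)) + K σ * w σ := by
        intro σ
        rw [Finset.sum_congr rfl fun i _ =>
            (lintegral_const_mul (ENNReal.ofReal (l i)) (costy_meas (σ i))).symm,
          ← lintegral_finset_sum _ (fun i _ => (costy_meas (σ i)).const_mul _)]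
        simp only [hK, hmm, hw]
        rw [lintegral_congr (fun x => pythag l (fun i => (hl i).le) hsum σ x)]
        rw [lintegral_add_right _ measurable_const]
        congr 1
        rw [lintegral_const]
      calc ∑ i, ENNReal.ofReal (l i) * ∫⁻ p, ENNReal.ofReal (‖p.1 - p.2‖ ^ 2) ∂(π i)
          = ∑ i, ENNReal.ofReal (l i)
            * ∑ σ ∈ Sig, ∫⁻ x, ENNReal.ofReal (‖x - σ i‖ ^ 2) ∂(ν σ) := by
            exact Finset.sum_congr rfl fun i _ => by rw [hcosti i]
        _ = ∑ i, ∑ σ ∈ Sig, ENNReal.ofReal (l i)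
            * ∫⁻ x, ENNReal.ofReal (‖x - σ i‖ ^ 2) ∂(ν σ) := by
            exact Finset.sum_congr rfl fun i _ => Finset.mul_sum _ _ _
        _ = ∑ σ ∈ Sig, ∑ i, ENNReal.ofReal (l i)
            * ∫⁻ x, ENNReal.ofReal (‖x - σ i‖ ^ 2) ∂(ν σ) := Finset.sum_comm
        _ = ∑ σ ∈ Sig, ((∫⁻ x, ENNReal.ofReal (‖x - mm σ‖ ^ 2) ∂(ν σ)) + K σ * w σ) :=
            Finset.sum_congr rfl fun σ _ => e1 σ
        _ = R + T := by rw [hR, hT, Finset.sum_add_distrib]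
    have hAle : ∑ i, ENNReal.ofReal (l i) * ∫⁻ p, ENNReal.ofReal (‖p.1 - p.2‖ ^ 2) ∂(π i)
        ≤ phi l Pm Pbar + ε := by
      have hsum1 : ∑ i, ENNReal.ofReal (l i) = 1 := by
        rw [← ENNReal.ofReal_sum_of_nonneg (fun i _ => (hl i).le), hsum, ENNReal.ofReal_one]
      calc ∑ i, ENNReal.ofReal (l i) * ∫⁻ p, ENNReal.ofReal (‖p.1 - p.2‖ ^ 2) ∂(π i)
          ≤ ∑ i, ENNReal.ofReal (l i) * (W2sq Pbar (Pm i) + ε) :=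
            Finset.sum_le_sum fun i _ => mul_le_mul_right (hπ3 i) _
        _ = ∑ i, (ENNReal.ofReal (l i) * W2sq Pbar (Pm i) + ENNReal.ofReal (l i) * ε) := by
            simp_rw [mul_add]
        _ = phi l Pm Pbar + (∑ i, ENNReal.ofReal (l i)) * ε := by
            rw [Finset.sum_add_distrib, phi, Finset.sum_mul]
        _ = phi l Pm Pbar + ε := by rw [hsum1, one_mul]
    set Q : Measure (Pt d) := ∑ σ ∈ Sig, w σ • Measure.dirac (mm σ) with hQ
    have hQapp : ∀ s : Set (Pt d), MeasurableSet s →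
        Q s = ∑ σ ∈ Sig, w σ * s.indicator 1 (mm σ) := by
      intro s hs
      rw [hQ]
      rw [show ((∑ σ ∈ Sig, w σ • Measure.dirac (mm σ)) s)
        = ∑ σ ∈ Sig, (w σ • Measure.dirac (mm σ)) s from by
          rw [Measure.coe_finset_sum, Finset.sum_apply]]
      refine Finset.sum_congr rfl fun σ _ => ?_
      rw [Measure.smul_apply, smul_eq_mul, Measure.dirac_apply' _ hs]
    have hwne : ∀ σ ∈ Sig, w σ ≠ ⊤ := by
      intro σ hσ
      refine ne_top_of_le_ne_top one_ne_top ?_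
      rw [← hwsum]
      exact Finset.single_le_sum (fun σ' _ => zero_le) hσ
    have hQprob : IsProbabilityMeasure Q := by
      constructor
      rw [hQapp Set.univ MeasurableSet.univ]
      simpa using hwsum
    have hQmom : FiniteSecondMoment Q := by
      rw [FiniteSecondMoment, hQ, lintegral_finset_sum_measure]
      refine ENNReal.sum_lt_top.2 fun σ hσ => ?_
      rw [lintegral_smul_measure, lintegral_dirac' _ normsq_meas]
      exact ENNReal.mul_lt_top (lt_top_iff_ne_top.2 (hwne σ hσ)) ofReal_lt_top
    have hκ : ∀ i, W2sq Q (Pm i) ≤ ∑ σ ∈ Sig, w σ * ENNReal.ofReal (‖mm σ - σ i‖ ^ 2) := by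
      intro i
      set κ : Measure (Pt d × Pt d) := ∑ σ ∈ Sig, w σ • Measure.dirac (mm σ, σ i) with hκd
      have happ : ∀ s : Set (Pt d × Pt d), MeasurableSet s →
          κ s = ∑ σ ∈ Sig, w σ * s.indicator 1 (mm σ, σ i) := by
        intro s hs
        rw [hκd, show ((∑ σ ∈ Sig, w σ • Measure.dirac (mm σ, σ i)) s)
          = ∑ σ ∈ Sig, (w σ • Measure.dirac (mm σ, σ i)) s from by
            rw [Measure.coe_finset_sum, Finset.sum_apply]]
        exact Finset.sum_congr rfl fun σ _ => by
          rw [Measure.smul_apply, smul_eq_mul, Measure.dirac_apply' _ hs]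
      have hκ1 : κ.map Prod.fst = Q := by
        ext s hs
        rw [Measure.map_apply measurable_fst hs, happ _ (measurable_fst hs), hQapp s hs]
        refine Finset.sum_congr rfl fun σ _ => ?_
        have hind : (Prod.fst ⁻¹' s).indicator (1 : Pt d × Pt d → ℝ≥0∞) (mm σ, σ i)
            = s.indicator (1 : Pt d → ℝ≥0∞) (mm σ) := by
          simp [Set.indicator_apply]
        rw [hind]
      have hκ2 : κ.map Prod.snd = Pm i := by
        ext s hs
        rw [Measure.map_apply measurable_snd hs, happ _ (measurable_snd hs)]
        rw [hfiber i (fun σ => w σ * (Prod.snd ⁻¹' s).indicator 1 (mm σ, σ i))]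
        have hstep : ∀ y ∈ F i, ∑ σ ∈ Sig.filter (fun σ => σ i = y),
            w σ * (Prod.snd ⁻¹' s).indicator 1 (mm σ, σ i)
            = Pm i {y} * s.indicator 1 y := by
          intro y hy
          rw [← hwfilter i y hy, Finset.sum_mul]
          refine Finset.sum_congr rfl fun σ hσ => ?_
          have hσi : σ i = y := (Finset.mem_filter.1 hσ).2
          congr 1
          simp [Set.indicator_apply, hσi]
        rw [Finset.sum_congr rfl hstep]
        have hrepr : Pm i s = ∑ y ∈ F i, Pm i {y} * s.indicator 1 y := by
          have h1 : Pm i s = Pm i (s ∩ ↑(F i)) := (measure_inter_conull (hFnull i)).symm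
          have h2 : s ∩ (↑(F i) : Set (Pt d))
              = ⋃ y ∈ (F i).filter (fun y => y ∈ s), ({y} : Set (Pt d)) := by
            ext z
            simp only [Set.mem_inter_iff, Set.mem_iUnion, Finset.mem_filter,
              Set.mem_singleton_iff, Finset.mem_coe]
            constructor
            · rintro ⟨hzs, hzF⟩; exact ⟨z, ⟨hzF, hzs⟩, rfl⟩
            · rintro ⟨y, ⟨hyF, hys⟩, rfl⟩; exact ⟨hys, hyF⟩
          have hdis : (↑((F i).filter (fun y => y ∈ s)) : Set (Pt d)).PairwiseDisjoint
              (fun y => ({y} : Set (Pt d))) := by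
            intro a _ b _ hab
            exact Set.disjoint_singleton.2 hab
          rw [h1, h2, measure_biUnion_finset hdis (fun b _ => measurableSet_singleton b)]
          rw [Finset.sum_filter]
          refine Finset.sum_congr rfl fun y _ => ?_
          by_cases hys : y ∈ s <;> simp [Set.indicator_apply, hys]
        exact hrepr.symm
      refine le_trans (W2sq_le_cost _ _ κ hκ1 hκ2) ?_
      rw [hκd, lintegral_finset_sum_measure]
      refine le_of_eq (Finset.sum_congr rfl fun σ _ => ?_)
      rw [lintegral_smul_measure, lintegral_dirac' _ cost_meas]
      rfl
    have hphiQ : phi l Pm Q ≤ T := by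
      rw [phi, hT]
      calc ∑ i, ENNReal.ofReal (l i) * W2sq Q (Pm i)
          ≤ ∑ i, ENNReal.ofReal (l i)
            * ∑ σ ∈ Sig, w σ * ENNReal.ofReal (‖mm σ - σ i‖ ^ 2) :=
            Finset.sum_le_sum fun i _ => mul_le_mul_right (hκ i) _
        _ = ∑ σ ∈ Sig, K σ * w σ := by
            simp_rw [Finset.mul_sum]
            rw [Finset.sum_comm]
            refine Finset.sum_congr rfl fun σ _ => ?_
            rw [hK, Finset.sum_mul]
            exact Finset.sum_congr rfl fun i _ => by ring
    have hRε : R ≤ ε := by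
      have h1 : phi l Pm Pbar + R ≤ phi l Pm Pbar + ε := by
        calc phi l Pm Pbar + R ≤ T + R :=
              add_le_add_left (le_trans (hopt Q hQprob hQmom) hphiQ) R
          _ = R + T := add_comm _ _
          _ = ∑ i, ENNReal.ofReal (l i) * ∫⁻ p, ENNReal.ofReal (‖p.1 - p.2‖ ^ 2) ∂(π i) :=
              hAeq.symm
          _ ≤ phi l Pm Pbar + ε := hAle
      exact (ENNReal.add_le_add_iff_left hopt0).1 h1
    calc ∫⁻ x, h x ∂Pbar = ∑ σ ∈ Sig, ∫⁻ x, h x ∂(ν σ) := by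
          rw [← lintegral_finset_sum_measure, hνsum]
      _ ≤ R := by
          rw [hR]
          refine Finset.sum_le_sum fun σ hσ => lintegral_mono fun x => ?_
          simp only [hh]
          exact iInf_le (fun σ' : {σ // σ ∈ Sig} => ENNReal.ofReal (‖x - mm ↑σ'‖ ^ 2)) ⟨σ, hσ⟩
      _ ≤ ε := hRε
  have hint1 : ∫⁻ x, h x ∂Pbar ≤ 1 := key 1 one_pos one_ne_top
  have hzero : ∫⁻ x, h x ∂Pbar = 0 := by
    by_contra h0
    have hfin' : ∫⁻ x, h x ∂Pbar ≠ ⊤ := (lt_of_le_of_lt hint1 one_lt_top).ne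
    have h2 := key ((∫⁻ x, h x ∂Pbar) / 2) (ENNReal.half_pos h0)
      (by simp [ENNReal.div_eq_top, hfin'])
    exact absurd h2 (not_le.2 (ENNReal.half_lt_self h0 hfin'))
  have hnull2 : Pbar {x | h x ≠ 0} = 0 := by
    have hae := (lintegral_eq_zero_iff hmeas_h).1 hzero
    rw [Filter.EventuallyEq, ae_iff] at hae
    simpa using hae
  have hsub : (centroidSet l Pm)ᶜ ⊆ {x | h x ≠ 0} := by
    intro x hx
    simp only [Set.mem_setOf_eq]
    intro hx0
    simp only [hh] at hx0
    rcases isEmpty_or_nonempty {σ // σ ∈ Sig} with hemp | hne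
    · rw [iInf_of_empty] at hx0
      simp at hx0
    · obtain ⟨σ0, hσ0⟩ := Finite.exists_min
        (fun σ : {σ // σ ∈ Sig} => ENNReal.ofReal (‖x - mm ↑σ‖ ^ 2))
      have h0' : ENNReal.ofReal (‖x - mm ↑σ0‖ ^ 2) = 0 :=
        le_antisymm ((le_iInf hσ0).trans (le_of_eq hx0)) (zero_le)
      rw [ENNReal.ofReal_eq_zero] at h0'
      have hnn : ‖x - mm ↑σ0‖ ^ 2 = 0 := le_antisymm h0' (sq_nonneg _)
      have : x = mm ↑σ0 := by
        have := pow_eq_zero_iff (two_ne_zero (α := ℕ)) |>.1 hnn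
        rwa [norm_eq_zero, sub_eq_zero] at this
      exact hx (this ▸ hmS ↑σ0 σ0.2)
  constructor
  · exact measure_mono_null hsub hnull2
  · have hSfin : (centroidSet l Pm).Finite := by
      have hpi : (Set.pi Set.univ fun i => msupp (Pm i)).Finite :=
        Set.Finite.pi (fun i => (hfin i).1)
      have himg : centroidSet l Pm ⊆ mm '' (Set.pi Set.univ fun i => msupp (Pm i)) := by
        rintro y ⟨xx, hxx, rfl⟩
        exact ⟨xx, fun i _ => hxx i, rfl⟩
      exact (hpi.image mm).subset himg
    refine hSfin.subset ?_
    intro x hx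
    by_contra hxc
    exact hx (measure_mono_null (Set.singleton_subset_iff.2 hxc)
      (measure_mono_null hsub hnull2))
end

section
/- Let P_1, …, P_N be discrete probability measures on ℝ^d, let λ_1, …, λ_N > 0 with ∑_{i=1}^N λ_i = 1, and let S_0 be a nonempty finite subset of ℝ^d. Then among all probability measures supported in S_0 there exists one, P̄_0, that minimizes φ over all probability measures supported in S_0 and whose support satisfies |P̄_0| ≤ ∑_{i=1}^N |P_i| − N + 1. -/
open MeasureTheory ENNReal

set_option linter.unusedSectionVars false
set_option linter.unusedVariables false

open Finset

namespace SparseLP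

variable {β : Type*} [DecidableEq β] {N : ℕ}

variable (s : Finset β) (t : Fin N → Finset β)

/-- The finite set of multi-indices. -/
noncomputable def E : Finset (β × (Fin N → β)) := s ×ˢ Fintype.piFinset t

noncomputable def marg (γ : β × (Fin N → β) → ℝ) (i : Fin N) (x : β) : ℝ :=
  ∑ e ∈ E s t, if e.2 i = x then γ e else 0

noncomputable def pmarg (γ : β × (Fin N → β) → ℝ) (i : Fin N) (y x : β) : ℝ :=
  ∑ e ∈ E s t, if e.1 = y ∧ e.2 i = x then γ e else 0

def Feas (p : Fin N → β → ℝ) (γ : β × (Fin N → β) → ℝ) : Prop :=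
  (∀ e, 0 ≤ γ e) ∧ (∀ e ∉ E s t, γ e = 0) ∧ ∀ i, ∀ x ∈ t i, marg s t γ i x = p i x

noncomputable def cost (c : β × (Fin N → β) → ℝ) (γ : β × (Fin N → β) → ℝ) : ℝ :=
  ∑ e ∈ E s t, γ e * c e

lemma piFinset_sum_ite (i : Fin N) (xb : β) (g : Fin N → β → ℝ) :
    ∑ x ∈ Fintype.piFinset t, (if x i = xb then ∏ j, g j (x j) else 0)
      = (if xb ∈ t i then g i xb else 0) * ∏ j ∈ Finset.univ.erase i, ∑ z ∈ t j, g j z := by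
  set h : Fin N → β → ℝ := fun j z => if j = i then (if z = xb then g j z else 0) else g j z with hh
  have key : ∀ x ∈ Fintype.piFinset t, (if x i = xb then ∏ j, g j (x j) else 0)
      = ∏ j, h j (x j) := by
    intro x _
    by_cases hc : x i = xb
    · simp only [hc, if_true]
      refine Finset.prod_congr rfl fun j _ => ?_
      by_cases hj : j = i
      · subst hj; simp [hh, hc]
      · simp [hh, hj]
    · simp only [hc, if_false]
      symm
      refine Finset.prod_eq_zero (Finset.mem_univ i) ?_
      simp [hh, hc]
  rw [Finset.sum_congr rfl key, ← Finset.prod_univ_sum]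
  rw [← Finset.mul_prod_erase _ _ (Finset.mem_univ i)]
  congr 1
  · simp [hh]
  · refine Finset.prod_congr rfl fun j hj => Finset.sum_congr rfl fun z _ => by
      simp [hh, Finset.ne_of_mem_erase hj]


lemma mem_E_iff {e : β × (Fin N → β)} :
    e ∈ E s t ↔ e.1 ∈ s ∧ ∀ j, e.2 j ∈ t j := by
  simp [E, Finset.mem_product, Fintype.mem_piFinset]

/-- Gluing pairwise couplings along the common first marginal. -/
lemma glue (hN : 0 < N) (p : Fin N → β → ℝ) (q : β → ℝ) (m : Fin N → β × β → ℝ)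
    (hq0 : ∀ y, 0 ≤ q y) (hm0 : ∀ i e, 0 ≤ m i e)
    (hrow : ∀ i, ∀ y ∈ s, ∑ x ∈ t i, m i (y, x) = q y)
    (hcol : ∀ i, ∀ x ∈ t i, ∑ y ∈ s, m i (y, x) = p i x) :
    ∃ γ, Feas s t p γ ∧ ∀ i, ∀ y ∈ s, ∀ x ∈ t i, pmarg s t γ i y x = m i (y, x) := by
  set γ : β × (Fin N → β) → ℝ := fun e =>
    if e ∈ E s t ∧ q e.1 ≠ 0 then (∏ j, m j (e.1, e.2 j)) / q e.1 ^ (N - 1) else 0 with hγ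
  have hγ0 : ∀ e, 0 ≤ γ e := by
    intro e
    rw [hγ]
    dsimp only
    split
    · rename_i hcond
      have hq : 0 < q e.1 := lt_of_le_of_ne (hq0 _) (Ne.symm hcond.2)
      exact div_nonneg (Finset.prod_nonneg fun j _ => hm0 j _) (by positivity)
    · exact le_refl 0
  have claim1 : ∀ y ∈ s, ∀ i, ∀ xb ∈ t i,
      (∑ x ∈ Fintype.piFinset t, if x i = xb then γ (y, x) else 0) = m i (y, xb) := by
    intro y hy i xb hxb
    by_cases hq : q y = 0
    · have hz : ∀ x ∈ Fintype.piFinset t, (if x i = xb then γ (y, x) else 0) = 0 := by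
        intro x _
        have : γ (y, x) = 0 := by rw [hγ]; simp [hq]
        simp [this]
      rw [Finset.sum_congr rfl hz, Finset.sum_const_zero]
      have h0 : ∑ x ∈ t i, m i (y, x) = 0 := by rw [hrow i y hy, hq]
      have := (Finset.sum_eq_zero_iff_of_nonneg (fun x _ => hm0 i (y, x))).mp h0 xb hxb
      exact this.symm
    · have hrepr : ∀ x ∈ Fintype.piFinset t,
          (if x i = xb then γ (y, x) else 0)
            = (if x i = xb then ∏ j, m j (y, x j) else 0) / q y ^ (N - 1) := by
        intro x hx
        have hmem : (y, x) ∈ E s t := by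
          rw [mem_E_iff]
          exact ⟨hy, fun j => (Fintype.mem_piFinset.mp hx) j⟩
        have : γ (y, x) = (∏ j, m j (y, x j)) / q y ^ (N - 1) := by
          rw [hγ]; simp [hmem, hq]
        split
        · exact this
        · simp
      rw [Finset.sum_congr rfl hrepr, ← Finset.sum_div]
      rw [piFinset_sum_ite t i xb (fun j z => m j (y, z))]
      have hrows : ∀ j ∈ Finset.univ.erase i, ∑ z ∈ t j, m j (y, z) = q y := by
        intro j _; exact hrow j y hy
      rw [Finset.prod_congr rfl hrows, Finset.prod_const]
      have hcard : (Finset.univ.erase i).card = N - 1 := by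
        rw [Finset.card_erase_of_mem (Finset.mem_univ i), Finset.card_univ, Fintype.card_fin]
      rw [hcard, if_pos hxb, mul_div_assoc, div_self (pow_ne_zero _ hq), mul_one]
  have hEprod : ∀ f : β × (Fin N → β) → ℝ,
      ∑ e ∈ E s t, f e = ∑ y ∈ s, ∑ x ∈ Fintype.piFinset t, f (y, x) := by
    intro f; rw [E, Finset.sum_product]
  refine ⟨γ, ⟨hγ0, ?_, ?_⟩, ?_⟩
  · intro e he; rw [hγ]; simp [he]
  · intro i xb hxb
    rw [marg, hEprod]
    have : ∀ y ∈ s, (∑ x ∈ Fintype.piFinset t, if (y, x).2 i = xb then γ (y, x) else 0)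
        = m i (y, xb) := fun y hy => claim1 y hy i xb hxb
    rw [Finset.sum_congr rfl this]
    exact hcol i xb hxb
  · intro i y hy xb hxb
    rw [pmarg, hEprod]
    have hsplit : ∀ y' ∈ s, (∑ x ∈ Fintype.piFinset t,
        if (y', x).1 = y ∧ (y', x).2 i = xb then γ (y', x) else 0)
        = if y' = y then m i (y', xb) else 0 := by
      intro y' hy'
      by_cases hyy : y' = y
      · subst hyy
        simp only [if_pos rfl, true_and]
        exact claim1 y' hy' i xb hxb
      · simp [hyy]
    rw [Finset.sum_congr rfl hsplit]
    simp [Finset.sum_ite_eq', hy]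


lemma feas_le_one {p : Fin N → β → ℝ} {γ} (hN : 0 < N)
    (hp0 : ∀ i x, 0 ≤ p i x) (hp1 : ∀ i, ∑ x ∈ t i, p i x = 1)
    (hf : Feas s t p γ) : ∀ e, γ e ≤ 1 := by
  intro e
  by_cases he : e ∈ E s t
  · set i0 : Fin N := ⟨0, hN⟩
    have hti : e.2 i0 ∈ t i0 := ((mem_E_iff s t).mp he).2 i0
    have h1 : γ e ≤ marg s t γ i0 (e.2 i0) := by
      rw [marg]
      have := Finset.single_le_sum (f := fun e' => if e'.2 i0 = e.2 i0 then γ e' else 0)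
        (fun e' _ => by split <;> [exact hf.1 e'; exact le_refl 0]) he
      simpa using this
    have h2 : p i0 (e.2 i0) ≤ 1 := by
      rw [← hp1 i0]
      exact Finset.single_le_sum (fun x _ => hp0 i0 x) hti
    rw [hf.2.2 i0 _ hti] at h1
    linarith
  · rw [hf.2.1 e he]; norm_num

lemma exists_min (hN : 0 < N) (hs : s.Nonempty) (p : Fin N → β → ℝ)
    (hp0 : ∀ i x, 0 ≤ p i x) (hp1 : ∀ i, ∑ x ∈ t i, p i x = 1)
    (c : β × (Fin N → β) → ℝ) :
    ∃ γ, Feas s t p γ ∧ ∀ γ', Feas s t p γ' → cost s t c γ ≤ cost s t c γ' := by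
  classical
  set F : Set ((β × (Fin N → β)) → ℝ) := {γ | Feas s t p γ} with hF
  -- F is nonempty via the independent glued coupling
  obtain ⟨y0, hy0⟩ := hs
  have hFne : F.Nonempty := by
    obtain ⟨γ0, hγ0, -⟩ := glue s t hN p (fun y => if y = y0 then 1 else 0)
      (fun i e => (if e.1 = y0 then 1 else 0) * p i e.2)
      (fun y => by split <;> norm_num)
      (fun i e => mul_nonneg (by split <;> norm_num) (hp0 i e.2))
      (fun i y hy => by
        dsimp only
        rw [← Finset.mul_sum (t i) (fun x => p i x) (if y = y0 then (1:ℝ) else 0), hp1 i]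
        split <;> norm_num)
      (fun i x hx => by
        dsimp only
        simp [ite_mul, Finset.sum_ite_eq', hy0])
    exact ⟨γ0, hγ0⟩
  -- F is closed
  have hmargcont : ∀ i x, Continuous (fun γ : (β × (Fin N → β)) → ℝ => marg s t γ i x) := by
    intro i x
    refine continuous_finset_sum _ (fun e _ => ?_)
    by_cases h : e.2 i = x
    · simpa [h] using continuous_apply e
    · simp only [h, if_false]; exact continuous_const
  have hFclosed : IsClosed F := by
    have : F = (⋂ e, {γ : (β × (Fin N → β)) → ℝ | 0 ≤ γ e}) ∩
        ((⋂ e ∈ (↑(E s t) : Set (β × (Fin N → β)))ᶜ, {γ | γ e = 0}) ∩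
        (⋂ i, ⋂ x ∈ t i, {γ | marg s t γ i x = p i x})) := by
      ext γ
      simp only [hF, Feas, Set.mem_inter_iff, Set.mem_iInter, Set.mem_setOf_eq,
        Set.mem_compl_iff, Finset.mem_coe]
      try tauto
    rw [this]
    refine (isClosed_iInter fun e => isClosed_le continuous_const (continuous_apply e)).inter
      (IsClosed.inter ?_ ?_)
    · exact isClosed_iInter fun e => isClosed_iInter fun _ =>
        isClosed_eq (continuous_apply e) continuous_const
    · exact isClosed_iInter fun i => isClosed_iInter fun x => isClosed_iInter fun _ =>
        isClosed_eq (hmargcont i x) continuous_const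
  -- F is contained in a compact box
  set K : Set ((β × (Fin N → β)) → ℝ) :=
    Set.univ.pi (fun e => if e ∈ E s t then Set.Icc (0:ℝ) 1 else {0}) with hK
  have hKcomp : IsCompact K := isCompact_univ_pi fun e => by
    split
    · exact isCompact_Icc
    · exact isCompact_singleton
  have hFK : F ⊆ K := by
    intro γ hγ
    rw [hK]
    intro e _
    by_cases he : e ∈ E s t
    · simp only [he, if_true]
      exact ⟨hγ.1 e, feas_le_one s t hN hp0 hp1 hγ e⟩
    · simp only [he, if_false, Set.mem_singleton_iff]
      exact hγ.2.1 e he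
  have hFcomp : IsCompact F := hKcomp.of_isClosed_subset hFclosed hFK
  have hcostcont : Continuous (cost s t c) := by
    refine continuous_finset_sum _ (fun e _ => ?_)
    exact (continuous_apply e).mul continuous_const
  obtain ⟨γ, hγF, hmin⟩ := hFcomp.exists_isMinOn hFne hcostcont.continuousOn
  exact ⟨γ, hγF, fun γ' hγ' => hmin hγ'⟩


lemma exists_kernel_vector {ι' : Type*} [Fintype ι'] {G : Type*} [Fintype G]
    (coef : G → ι' → ℝ) (h : Fintype.card G < Fintype.card ι') :
    ∃ u : ι' → ℝ, u ≠ 0 ∧ ∀ g, ∑ e, coef g e * u e = 0 := by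
  classical
  set Φ : (ι' → ℝ) →ₗ[ℝ] (G → ℝ) :=
    LinearMap.pi (fun g => ∑ e, coef g e • LinearMap.proj e) with hΦ
  have hnotinj : ¬ Function.Injective Φ := by
    intro hinj
    have := LinearMap.finrank_le_finrank_of_injective hinj
    rw [Module.finrank_pi, Module.finrank_pi] at this
    omega
  rw [Function.not_injective_iff] at hnotinj
  obtain ⟨a, b, hab, hne⟩ := hnotinj
  refine ⟨a - b, sub_ne_zero_of_ne hne, fun g => ?_⟩
  have : Φ (a - b) = 0 := by rw [map_sub, hab, sub_self]
  have hg := congrFun this g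
  rw [hΦ] at hg
  simpa [LinearMap.pi_apply, LinearMap.sum_apply, LinearMap.smul_apply,
    LinearMap.proj_apply, smul_eq_mul] using hg


lemma marg_linear (γ U : β × (Fin N → β) → ℝ) (θ : ℝ) (i : Fin N) (x : β) :
    marg s t (fun e => γ e + θ * U e) i x = marg s t γ i x + θ * marg s t U i x := by
  rw [marg, marg, marg, Finset.mul_sum, ← Finset.sum_add_distrib]
  refine Finset.sum_congr rfl fun e _ => by split <;> simp

lemma cost_linear (c γ U : β × (Fin N → β) → ℝ) (θ : ℝ) :
    cost s t c (fun e => γ e + θ * U e) = cost s t c γ + θ * cost s t c U := by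
  rw [cost, cost, cost, Finset.mul_sum, ← Finset.sum_add_distrib]
  refine Finset.sum_congr rfl fun e _ => by ring

lemma exists_sparse_min (hN : 0 < N) (hs : s.Nonempty) (ht : ∀ i, (t i).Nonempty)
    (p : Fin N → β → ℝ)
    (hp0 : ∀ i x, 0 ≤ p i x) (hp1 : ∀ i, ∑ x ∈ t i, p i x = 1)
    (c : β × (Fin N → β) → ℝ) :
    ∃ γ, Feas s t p γ ∧ (∀ γ', Feas s t p γ' → cost s t c γ ≤ cost s t c γ') ∧
      ((E s t).filter (fun e => γ e ≠ 0)).card ≤ (∑ i, (t i).card) - N + 1 := by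
  classical
  set Opt : (β × (Fin N → β) → ℝ) → Prop :=
    fun γ => Feas s t p γ ∧ ∀ γ', Feas s t p γ' → cost s t c γ ≤ cost s t c γ' with hOptdef
  set Kset : Set ℕ := {k | ∃ γ, Opt γ ∧ ((E s t).filter (fun e => γ e ≠ 0)).card = k} with hKset
  have hKne : Kset.Nonempty := by
    obtain ⟨γ, h1, h2⟩ := exists_min s t hN hs p hp0 hp1 c
    exact ⟨_, γ, ⟨h1, h2⟩, rfl⟩
  obtain ⟨γ, hOpt, hcard⟩ := Nat.sInf_mem hKne
  refine ⟨γ, hOpt.1, hOpt.2, ?_⟩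
  by_contra hbig
  push_neg at hbig
  set D := (E s t).filter (fun e => γ e ≠ 0) with hD
  have hDE : D ⊆ E s t := Finset.filter_subset _ _
  have hDpos : ∀ e ∈ D, 0 < γ e :=
    fun e he => lt_of_le_of_ne (hOpt.1.1 e) (Ne.symm (Finset.mem_filter.mp he).2)
  have htc : ∀ i, 0 < (t i).card := fun i => Finset.card_pos.mpr (ht i)
  set r : Fin N → β := fun i => (ht i).choose with hr
  have hrmem : ∀ i, r i ∈ t i := fun i => (ht i).choose_spec
  have hcardG : Fintype.card (Option ((i : Fin N) × {x // x ∈ (t i).erase (r i)}))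
      = (∑ i, ((t i).card - 1)) + 1 := by
    rw [Fintype.card_option, Fintype.card_sigma]
    congr 1
    refine Finset.sum_congr rfl fun i _ => ?_
    rw [Fintype.card_coe, Finset.card_erase_of_mem (hrmem i)]
  have hsumN : (∑ i, ((t i).card - 1)) + N = ∑ i, (t i).card := by
    have h1 : (∑ i : Fin N, (((t i).card - 1) + 1)) = ∑ i, (t i).card :=
      Finset.sum_congr rfl fun i _ => Nat.succ_pred_eq_of_pos (htc i)
    rw [Finset.sum_add_distrib] at h1
    simpa using h1
  have hcardlt : Fintype.card (Option ((i : Fin N) × {x // x ∈ (t i).erase (r i)}))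
      < Fintype.card ↥D := by
    rw [hcardG, Fintype.card_coe]
    omega
  set coef : Option ((i : Fin N) × {x // x ∈ (t i).erase (r i)}) → ↥D → ℝ := fun g =>
    match g with
    | none => fun _ => (1 : ℝ)
    | some a => fun e => if (↑e : β × (Fin N → β)).2 a.1 = ↑a.2 then (1 : ℝ) else 0
    with hcoef
  obtain ⟨u, hu0, hker⟩ := exists_kernel_vector coef hcardlt
  set U : (β × (Fin N → β)) → ℝ := fun e => if h : e ∈ D then u ⟨e, h⟩ else 0 with hU
  have hUD : ∀ e ∉ D, U e = 0 := fun e he => by rw [hU]; simp [he]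
  have hUE : ∀ e ∉ E s t, U e = 0 := fun e he => hUD e (fun hDm => he (hDE hDm))
  have hsumD : ∀ f : (β × (Fin N → β)) → ℝ, (∑ e ∈ D, f e * U e) = ∑ e : ↥D, f ↑e * u e := by
    intro f
    rw [← Finset.sum_attach D (fun e => f e * U e), Finset.univ_eq_attach]
    refine Finset.sum_congr rfl fun e _ => ?_
    rw [hU]
    simp [e.2]
  have htotal : ∑ e ∈ D, U e = 0 := by
    have h0 := hker none
    have : ∑ e ∈ D, U e = ∑ e ∈ D, (1 : ℝ) * U e := by simp
    rw [this, hsumD (fun _ => (1:ℝ))]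
    simpa [hcoef] using h0
  have hDmem2 : ∀ e ∈ D, ∀ i, e.2 i ∈ t i := fun e he i => ((mem_E_iff s t).mp (hDE he)).2 i
  have hmargD : ∀ i, ∀ x ∈ t i, (∑ e ∈ D, if e.2 i = x then U e else 0) = 0 := by
    intro i x hx
    have herase : ∀ x' ∈ (t i).erase (r i), (∑ e ∈ D, if e.2 i = x' then U e else 0) = 0 := by
      intro x' hx'
      have h0 := hker (some ⟨i, ⟨x', hx'⟩⟩)
      have heq : ∀ e ∈ D, (if e.2 i = x' then U e else 0)
          = (fun e' => if e'.2 i = x' then (1:ℝ) else 0) e * U e := by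
        intro e _; dsimp only; split <;> simp
      rw [Finset.sum_congr rfl heq, hsumD]
      simpa [hcoef] using h0
    have hall : ∑ x' ∈ t i, (∑ e ∈ D, if e.2 i = x' then U e else 0) = 0 := by
      rw [Finset.sum_comm]
      have : ∀ e ∈ D, (∑ x' ∈ t i, if e.2 i = x' then U e else 0) = U e := by
        intro e he
        rw [Finset.sum_ite_eq (t i) (e.2 i) (fun _ => U e)]
        simp [hDmem2 e he i]
      rw [Finset.sum_congr rfl this, htotal]
    have hsplit := Finset.add_sum_erase (t i)
      (fun x' => ∑ e ∈ D, if e.2 i = x' then U e else 0) (hrmem i)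
    rw [Finset.sum_congr rfl herase, Finset.sum_const_zero] at hsplit
    by_cases hxr : x = r i
    · subst hxr
      rw [hall] at hsplit
      linarith [hsplit]
    · exact herase x (Finset.mem_erase.mpr ⟨hxr, hx⟩)
  have hmargU : ∀ i, ∀ x ∈ t i, marg s t U i x = 0 := by
    intro i x hx
    rw [marg, ← Finset.sum_subset hDE (fun e _ heD => by simp [hUD e heD])]
    exact hmargD i x hx
  have hfeasθ : ∀ θ : ℝ, (∀ e ∈ D, 0 ≤ γ e + θ * U e) →
      Feas s t p (fun e => γ e + θ * U e) := by
    intro θ hpos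
    refine ⟨?_, ?_, ?_⟩
    · intro e
      dsimp only
      by_cases heD : e ∈ D
      · exact hpos e heD
      · rw [hUD e heD]; simpa using hOpt.1.1 e
    · intro e he
      dsimp only
      rw [hOpt.1.2.1 e he, hUE e he]; ring
    · intro i x hx
      rw [marg_linear, hOpt.1.2.2 i x hx, hmargU i x hx]; ring
  have hDne : D.Nonempty := Finset.card_pos.mp (by omega)
  set ε := D.inf' hDne (fun e => γ e / (|U e| + 1)) with hε
  have hεpos : 0 < ε := by
    rw [hε, Finset.lt_inf'_iff]
    exact fun e he => div_pos (hDpos e he) (by positivity)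
  have hεle : ∀ e ∈ D, ε * (|U e| + 1) ≤ γ e := by
    intro e he
    have h1 : ε ≤ γ e / (|U e| + 1) := Finset.inf'_le _ he
    exact (le_div_iff₀ (by positivity)).mp h1
  have hposθ : ∀ θ : ℝ, |θ| ≤ ε → ∀ e ∈ D, 0 ≤ γ e + θ * U e := by
    intro θ hθ e he
    have h1 := hεle e he
    have h2 : -(|θ| * |U e|) ≤ θ * U e := by
      rw [← abs_mul]; exact neg_abs_le _
    nlinarith [abs_nonneg (U e), abs_nonneg θ]
  have hcostU : cost s t c U = 0 := by
    have hplus := hOpt.2 _ (hfeasθ ε (hposθ ε (by rw [abs_of_pos hεpos])))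
    have hminus := hOpt.2 _ (hfeasθ (-ε) (hposθ (-ε) (by rw [abs_neg, abs_of_pos hεpos])))
    rw [cost_linear] at hplus hminus
    nlinarith
  have hAne : (D.filter (fun e => U e ≠ 0)).Nonempty := by
    obtain ⟨e, he⟩ := Function.ne_iff.mp hu0
    refine ⟨↑e, Finset.mem_filter.mpr ⟨e.2, ?_⟩⟩
    rw [hU]
    simpa [e.2] using he
  set A := D.filter (fun e => U e ≠ 0) with hAdef
  obtain ⟨estar, hestarA, hρeq⟩ := Finset.exists_mem_eq_inf' hAne (fun e => γ e / |U e|)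
  set ρ := A.inf' hAne (fun e => γ e / |U e|) with hρ
  have hUestar : U estar ≠ 0 := (Finset.mem_filter.mp hestarA).2
  have hestarD : estar ∈ D := (Finset.mem_filter.mp hestarA).1
  have hρpos : 0 < ρ := by
    rw [hρ, Finset.lt_inf'_iff]
    exact fun e he => div_pos (hDpos e (Finset.mem_filter.mp he).1)
      (abs_pos.mpr (Finset.mem_filter.mp he).2)
  set η := if 0 < U estar then ρ else -ρ with hη
  have hηabs : |η| = ρ := by
    rw [hη]; split
    · exact abs_of_pos hρpos
    · rw [abs_neg]; exact abs_of_pos hρpos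
  have hηe : η * U estar = ρ * |U estar| := by
    rw [hη]; split
    · rename_i hpos'; rw [abs_of_pos hpos']
    · rename_i hneg'
      have : U estar < 0 := lt_of_le_of_ne (not_lt.mp hneg') hUestar
      rw [abs_of_neg this]; ring
  have hρle : ∀ e ∈ A, ρ * |U e| ≤ γ e := by
    intro e he
    have h1 : ρ ≤ γ e / |U e| := Finset.inf'_le _ he
    exact (le_div_iff₀ (abs_pos.mpr (Finset.mem_filter.mp he).2)).mp h1
  have hγ'pos : ∀ e ∈ D, 0 ≤ γ e + (-η) * U e := by
    intro e he
    by_cases hUe : U e = 0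
    · rw [hUe]; simpa using (hDpos e he).le
    · have h1 := hρle e (Finset.mem_filter.mpr ⟨he, hUe⟩)
      have h2 : -(|η| * |U e|) ≤ (-η) * U e := by
        rw [← abs_neg η, ← abs_mul]; exact neg_abs_le _
      rw [hηabs] at h2
      linarith
  have hfeas' := hfeasθ (-η) hγ'pos
  have hcost' : cost s t c (fun e => γ e + (-η) * U e) = cost s t c γ := by
    rw [cost_linear, hcostU]; ring
  have hγ'estar : γ estar + (-η) * U estar = 0 := by
    have : γ estar / |U estar| * |U estar| = γ estar :=
      div_mul_cancel₀ _ (abs_ne_zero.mpr hUestar)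
    rw [neg_mul, hηe, hρeq]
    linarith [this]
  have hsub : (E s t).filter (fun e => γ e + (-η) * U e ≠ 0) ⊆ D.erase estar := by
    intro e he'
    obtain ⟨heE, hne⟩ := Finset.mem_filter.mp he'
    have heD : e ∈ D := by
      by_contra hnD
      have h1 := hUD e hnD
      have h2 : γ e = 0 := by
        by_contra hγne
        exact hnD (Finset.mem_filter.mpr ⟨heE, hγne⟩)
      rw [h1, h2] at hne
      simp at hne
    refine Finset.mem_erase.mpr ⟨?_, heD⟩
    intro hee
    rw [hee] at hne
    exact hne hγ'estar
  have hcard' : ((E s t).filter (fun e => γ e + (-η) * U e ≠ 0)).card < D.card :=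
    lt_of_le_of_lt (Finset.card_le_card hsub)
      (by rw [Finset.card_erase_of_mem hestarD]; omega)
  have hOpt' : Opt (fun e => γ e + (-η) * U e) := by
    refine ⟨hfeas', fun γ'' hγ'' => ?_⟩
    rw [hcost']
    exact hOpt.2 γ'' hγ''
  have hmem : ((E s t).filter (fun e => γ e + (-η) * U e ≠ 0)).card ∈ Kset :=
    ⟨_, hOpt', rfl⟩
  have hle := Nat.sInf_le hmem
  omega


lemma marg_eq_filter (γ : β × (Fin N → β) → ℝ) (i : Fin N) (x : β) :
    marg s t γ i x = ∑ e ∈ (E s t).filter (fun e => e.2 i = x), γ e :=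
  (Finset.sum_filter _ _).symm

lemma total_mass (hN : 0 < N) {p : Fin N → β → ℝ} {γ}
    (hp1 : ∀ i, ∑ x ∈ t i, p i x = 1) (hf : Feas s t p γ) :
    ∑ e ∈ E s t, γ e = 1 := by
  set i0 : Fin N := ⟨0, hN⟩
  have hmap : ∀ e ∈ E s t, e.2 i0 ∈ t i0 := fun e he => ((mem_E_iff s t).mp he).2 i0
  rw [← Finset.sum_fiberwise_of_maps_to hmap γ]
  have : ∀ x ∈ t i0, (∑ e ∈ (E s t).filter (fun e => e.2 i0 = x), γ e) = p i0 x := by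
    intro x hx
    rw [← marg_eq_filter]
    exact hf.2.2 i0 x hx
  rw [Finset.sum_congr rfl this]
  exact hp1 i0

lemma sum_pair_fiber (γ : β × (Fin N → β) → ℝ) (i : Fin N) (f : β → β → ℝ) :
    ∑ e ∈ E s t, γ e * f e.1 (e.2 i)
      = ∑ z ∈ s ×ˢ t i, pmarg s t γ i z.1 z.2 * f z.1 z.2 := by
  have hmap : ∀ e ∈ E s t, (e.1, e.2 i) ∈ s ×ˢ t i := fun e he =>
    Finset.mem_product.mpr ⟨((mem_E_iff s t).mp he).1, ((mem_E_iff s t).mp he).2 i⟩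
  rw [← Finset.sum_fiberwise_of_maps_to hmap (fun e => γ e * f e.1 (e.2 i))]
  refine Finset.sum_congr rfl fun z hz => ?_
  rw [pmarg, Finset.sum_mul, Finset.sum_filter]
  refine Finset.sum_congr rfl fun e he => ?_
  have hiff : ((e.1, e.2 i) = z) ↔ (e.1 = z.1 ∧ e.2 i = z.2) := by
    rw [Prod.ext_iff]
  by_cases hc : e.1 = z.1 ∧ e.2 i = z.2
  · rw [if_pos (hiff.mpr hc), if_pos hc, hc.1, hc.2]
  · rw [if_neg (fun h => hc (hiff.mp h)), if_neg hc, zero_mul]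

end SparseLP

section Bridge
open MeasureTheory ENNReal
open scoped ENNReal

variable {α : Type*} [MeasurableSpace α] [MeasurableSingletonClass α]

lemma measure_coe_finset (μ : Measure α) (F : Finset α) :
    μ (↑F : Set α) = ∑ x ∈ F, μ {x} := by
  have hdisj : (↑F : Set α).PairwiseDisjoint (fun x : α => ({x} : Set α)) := by
    intro a _ b _ hab
    exact Set.disjoint_singleton.mpr hab
  have h2 : (⋃ b ∈ F, ({b} : Set α)) = ↑F := by ext x; simp
  calc μ ↑F = μ (⋃ b ∈ F, ({b} : Set α)) := by rw [h2]
    _ = ∑ x ∈ F, μ {x} :=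
      measure_biUnion_finset hdisj (fun b _ => measurableSet_singleton b)

lemma repr_discrete (μ : Measure α) (F : Finset α) (h : μ (↑F : Set α)ᶜ = 0) :
    μ = ∑ x ∈ F, μ {x} • Measure.dirac x := by
  classical
  ext B hB
  rw [Measure.finset_sum_apply]
  have hFm : MeasurableSet (↑F : Set α) := F.finite_toSet.measurableSet
  have h1 : μ (B \ ↑F) = 0 := measure_mono_null (fun x hx => hx.2) h
  have hsplit : μ B = μ (B ∩ ↑F) := by
    rw [← measure_inter_add_diff B hFm, h1, add_zero]
  rw [hsplit]
  have hBF : B ∩ ↑F = ↑(F.filter (fun x => x ∈ B)) := by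
    ext x; simp [and_comm]
  rw [hBF, measure_coe_finset, Finset.sum_filter]
  refine Finset.sum_congr rfl fun x _ => ?_
  rw [Measure.smul_apply, Measure.dirac_apply' x hB, smul_eq_mul]
  by_cases hxB : x ∈ B
  · simp [hxB]
  · simp [hxB]

lemma lint_repr {κ : Type*} (F : Finset κ) (cw : κ → ℝ≥0∞) (g : κ → α) (f : α → ℝ≥0∞) :
    ∫⁻ x, f x ∂(∑ e ∈ F, cw e • Measure.dirac (g e)) = ∑ e ∈ F, cw e * f (g e) := by
  rw [MeasureTheory.lintegral_finset_sum_measure]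
  refine Finset.sum_congr rfl fun e _ => ?_
  rw [lintegral_smul_measure, lintegral_dirac, smul_eq_mul]

lemma map_repr {α₂ : Type*} [MeasurableSpace α₂] {κ : Type*} (F : Finset κ) (cw : κ → ℝ≥0∞)
    (g : κ → α) {h : α → α₂} (hh : Measurable h) :
    (∑ e ∈ F, cw e • Measure.dirac (g e)).map h
      = ∑ e ∈ F, cw e • Measure.dirac (h (g e)) := by
  ext B hB
  rw [Measure.map_apply hh hB, Measure.finset_sum_apply, Measure.finset_sum_apply]
  refine Finset.sum_congr rfl fun e _ => ?_
  rw [Measure.smul_apply, Measure.smul_apply, Measure.dirac_apply' _ (hh hB),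
    Measure.dirac_apply' _ hB]
  simp only [Set.indicator, Pi.one_apply]
  by_cases hm : h (g e) ∈ B <;> simp [Set.mem_preimage, hm]

lemma smuldirac_singleton {κ : Type*} [DecidableEq α] (F : Finset κ) (cw : κ → ℝ≥0∞)
    (g : κ → α) (b : α) :
    (∑ e ∈ F, cw e • Measure.dirac (g e)) {b} = ∑ e ∈ F, (if g e = b then cw e else 0) := by
  rw [Measure.finset_sum_apply]
  refine Finset.sum_congr rfl fun e _ => ?_
  rw [Measure.smul_apply, Measure.dirac_apply' _ (measurableSet_singleton b), smul_eq_mul]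
  by_cases hg : g e = b
  · simp [hg]
  · simp [Set.indicator, hg]

lemma sum_singleton_le_lintegral (F : Finset α) (f : α → ℝ≥0∞) (μ : Measure α) :
    ∑ z ∈ F, f z * μ {z} ≤ ∫⁻ x, f x ∂μ := by
  rw [← MeasureTheory.lintegral_finset]
  exact lintegral_mono' Measure.restrict_le_self le_rfl

end Bridge

/-- for any nonempty finite candidate support set S₀ there exists
a sparse approximate barycenter in S₀, i.e. a minimizer of φ among probability
measures supported in S₀ with at most `∑ i, |P i| - N + 1` support points. -/
theorem exists_sparse_approx_barycenter {d N : ℕ}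
    (l : Fin N → ℝ) (Pm : Fin N → Measure (Pt d))
    (hl : ∀ i, 0 < l i) (hsum : ∑ i, l i = 1)
    (hprob : ∀ i, IsProbabilityMeasure (Pm i))
    (hfin : ∀ i, FinitelySupported (Pm i))
    (S₀ : Set (Pt d)) (hS₀fin : S₀.Finite) (hS₀ne : S₀.Nonempty) :
    ∃ P₀ : Measure (Pt d), IsProbabilityMeasure P₀ ∧ P₀ S₀ᶜ = 0 ∧
      (∀ Q : Measure (Pt d), IsProbabilityMeasure Q → Q S₀ᶜ = 0 →
        phi l Pm P₀ ≤ phi l Pm Q) ∧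
      (msupp P₀).ncard ≤ (∑ i, (msupp (Pm i)).ncard) - N + 1 := by
  classical
  rcases Nat.eq_zero_or_pos N with hN0 | hN
  · subst hN0
    obtain ⟨y0, hy0⟩ := hS₀ne
    refine ⟨Measure.dirac y0, Measure.dirac.isProbabilityMeasure, ?_, ?_, ?_⟩
    · rw [Measure.dirac_apply' _ hS₀fin.measurableSet.compl]
      simp [hy0]
    · intro Q _ _
      simp [phi]
    · have hsub : msupp (Measure.dirac y0) ⊆ {y0} := by
        intro x hx
        rw [msupp, Set.mem_setOf_eq] at hx
        by_contra hxy
        apply hx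
        rw [Measure.dirac_apply' _ (measurableSet_singleton x)]
        have : y0 ∉ ({x} : Set (Pt d)) := fun h => hxy (by simpa using h.symm)
        simp [Set.indicator, this]
      calc (msupp (Measure.dirac y0)).ncard ≤ ({y0} : Set (Pt d)).ncard :=
            Set.ncard_le_ncard hsub (Set.finite_singleton _)
        _ = 1 := Set.ncard_singleton _
        _ ≤ _ := by simp
  -- main case N ≥ 1
  set s : Finset (Pt d) := hS₀fin.toFinset with hsdef
  have hscoe : (↑s : Set (Pt d)) = S₀ := hS₀fin.coe_toFinset
  set t : Fin N → Finset (Pt d) := fun i => (hfin i).1.toFinset with htdef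
  have htcoe : ∀ i, (↑(t i) : Set (Pt d)) = msupp (Pm i) := fun i => (hfin i).1.coe_toFinset
  set p : Fin N → Pt d → ℝ := fun i x => (Pm i {x}).toReal with hpdef
  have hp0 : ∀ i x, 0 ≤ p i x := fun i x => ENNReal.toReal_nonneg
  have hPmfin : ∀ i (x : Pt d), Pm i {x} ≠ ⊤ := fun i x => measure_ne_top _ _
  have hofp : ∀ i x, ENNReal.ofReal (p i x) = Pm i {x} := fun i x =>
    ENNReal.ofReal_toReal (hPmfin i x)
  have htnull : ∀ i, Pm i (↑(t i) : Set (Pt d))ᶜ = 0 := fun i => by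
    rw [htcoe i]; exact (hfin i).2
  have htfull : ∀ i, Pm i (↑(t i) : Set (Pt d)) = 1 := by
    intro i
    have h1 := measure_add_measure_compl (μ := Pm i) ((t i).finite_toSet.measurableSet)
    rw [htnull i, add_zero, measure_univ] at h1
    exact h1
  have hp1 : ∀ i, ∑ x ∈ t i, p i x = 1 := by
    intro i
    have h1 : ∑ x ∈ t i, Pm i {x} = 1 := by
      rw [← measure_coe_finset, htfull i]
    rw [hpdef]
    have := ENNReal.toReal_sum (s := t i) (f := fun x => Pm i {x})
      (fun x _ => hPmfin i x)
    rw [h1] at this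
    simpa using this.symm
  have hsne : s.Nonempty := by
    obtain ⟨y0, hy0⟩ := hS₀ne
    exact ⟨y0, by rw [hsdef, Set.Finite.mem_toFinset]; exact hy0⟩
  have htne : ∀ i, (t i).Nonempty := by
    intro i
    rw [← Finset.coe_nonempty, htcoe i]
    by_contra hemp
    rw [Set.not_nonempty_iff_eq_empty] at hemp
    have h2 := (hfin i).2
    rw [hemp, Set.compl_empty, measure_univ] at h2
    exact one_ne_zero h2
  set c : Pt d × (Fin N → Pt d) → ℝ := fun e => ∑ i, l i * ‖e.1 - e.2 i‖^2 with hcdef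
  obtain ⟨γ, hfeas, hmin, hcard⟩ := SparseLP.exists_sparse_min s t hN hsne htne p hp0 hp1 c
  set P₀ : Measure (Pt d) :=
    ∑ e ∈ SparseLP.E s t, ENNReal.ofReal (γ e) • Measure.dirac e.1 with hP₀
  have htot : ∑ e ∈ SparseLP.E s t, γ e = 1 := SparseLP.total_mass s t hN hp1 hfeas
  have hprob₀ : IsProbabilityMeasure P₀ := by
    constructor
    rw [hP₀, Measure.finset_sum_apply]
    have hterm : ∀ e ∈ SparseLP.E s t,
        (ENNReal.ofReal (γ e) • Measure.dirac e.1) Set.univ = ENNReal.ofReal (γ e) := by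
      intro e _
      rw [Measure.smul_apply, smul_eq_mul]
      simp
    rw [Finset.sum_congr rfl hterm, ← ENNReal.ofReal_sum_of_nonneg (fun e _ => hfeas.1 e), htot]
    simp
  have hE1 : ∀ e ∈ SparseLP.E s t, e.1 ∈ S₀ := fun e he => by
    have h1 := ((SparseLP.mem_E_iff s t).mp he).1
    rw [← hscoe]
    exact h1
  have hnull : P₀ S₀ᶜ = 0 := by
    rw [hP₀, Measure.finset_sum_apply]
    refine Finset.sum_eq_zero fun e he => ?_
    rw [Measure.smul_apply, Measure.dirac_apply' _ hS₀fin.measurableSet.compl, smul_eq_mul]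
    simp [Set.indicator, hE1 e he]
  -- the upper bound for P₀
  have hswap : ∀ γ' : Pt d × (Fin N → Pt d) → ℝ,
      ∑ i, l i * ∑ e ∈ SparseLP.E s t, γ' e * ‖e.1 - e.2 i‖^2 = SparseLP.cost s t c γ' := by
    intro γ'
    rw [SparseLP.cost]
    simp_rw [Finset.mul_sum]
    rw [Finset.sum_comm]
    refine Finset.sum_congr rfl fun e _ => ?_
    rw [hcdef, Finset.mul_sum]
    exact Finset.sum_congr rfl fun i _ => by ring
  have hupper : phi l Pm P₀ ≤ ENNReal.ofReal (SparseLP.cost s t c γ) := by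
    have hterm : ∀ i, W2sq P₀ (Pm i)
        ≤ ENNReal.ofReal (∑ e ∈ SparseLP.E s t, γ e * ‖e.1 - e.2 i‖^2) := by
      intro i
      set π : Measure (Pt d × Pt d) :=
        ∑ e ∈ SparseLP.E s t, ENNReal.ofReal (γ e) • Measure.dirac (e.1, e.2 i) with hπ
      have hfst : π.map Prod.fst = P₀ := by
        rw [hπ, map_repr _ _ _ measurable_fst, hP₀]
      have hsnd : π.map Prod.snd = Pm i := by
        rw [hπ, map_repr _ _ _ measurable_snd]
        have hmap : ∀ e ∈ SparseLP.E s t, e.2 i ∈ t i :=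
          fun e he => ((SparseLP.mem_E_iff s t).mp he).2 i
        rw [← Finset.sum_fiberwise_of_maps_to hmap
          (fun e => ENNReal.ofReal (γ e) • Measure.dirac (e.2 i))]
        have hfib : ∀ x ∈ t i,
            (∑ e ∈ (SparseLP.E s t).filter (fun e => e.2 i = x),
              ENNReal.ofReal (γ e) • Measure.dirac (e.2 i))
            = Pm i {x} • Measure.dirac x := by
          intro x hx
          have heach : ∀ e ∈ (SparseLP.E s t).filter (fun e => e.2 i = x),
              ENNReal.ofReal (γ e) • Measure.dirac (e.2 i)
                = ENNReal.ofReal (γ e) • Measure.dirac x := by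
            intro e he
            rw [(Finset.mem_filter.mp he).2]
          rw [Finset.sum_congr rfl heach, ← Finset.sum_smul]
          congr 1
          rw [← ENNReal.ofReal_sum_of_nonneg (fun e _ => hfeas.1 e)]
          have hmarg : (∑ e ∈ (SparseLP.E s t).filter (fun e => e.2 i = x), γ e) = p i x := by
            rw [Finset.sum_filter]
            exact hfeas.2.2 i x hx
          rw [hmarg, hofp]
        rw [Finset.sum_congr rfl hfib]
        exact (repr_discrete (Pm i) (t i) (htnull i)).symm
      have hle : W2sq P₀ (Pm i) ≤ ∫⁻ z, ENNReal.ofReal (‖z.1 - z.2‖^2) ∂π := by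
        rw [W2sq]
        exact iInf_le_of_le π (iInf_le_of_le ⟨hfst, hsnd⟩ le_rfl)
      refine hle.trans ?_
      rw [hπ, lint_repr,
        ENNReal.ofReal_sum_of_nonneg (fun e _ => mul_nonneg (hfeas.1 e) (by positivity))]
      refine le_of_eq (Finset.sum_congr rfl fun e _ => ?_)
      rw [ENNReal.ofReal_mul (hfeas.1 e)]
    rw [phi]
    calc ∑ i, ENNReal.ofReal (l i) * W2sq P₀ (Pm i)
        ≤ ∑ i, ENNReal.ofReal (l i)
            * ENNReal.ofReal (∑ e ∈ SparseLP.E s t, γ e * ‖e.1 - e.2 i‖^2) :=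
          Finset.sum_le_sum fun i _ => mul_le_mul_right (hterm i) _
      _ = ENNReal.ofReal (∑ i, l i * ∑ e ∈ SparseLP.E s t, γ e * ‖e.1 - e.2 i‖^2) := by
          rw [ENNReal.ofReal_sum_of_nonneg (fun i _ => mul_nonneg (hl i).le
            (Finset.sum_nonneg fun e _ => mul_nonneg (hfeas.1 e) (by positivity)))]
          exact Finset.sum_congr rfl fun i _ => (ENNReal.ofReal_mul (hl i).le).symm
      _ = ENNReal.ofReal (SparseLP.cost s t c γ) := by rw [hswap]
  -- the lower bound for arbitrary Q
  have hlower : ∀ Q : Measure (Pt d), IsProbabilityMeasure Q → Q S₀ᶜ = 0 →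
      ENNReal.ofReal (SparseLP.cost s t c γ) ≤ phi l Pm Q := by
    intro Q hQprob hQnull
    by_cases htop : phi l Pm Q = ⊤
    · rw [htop]; exact le_top
    have hWfin : ∀ i, W2sq Q (Pm i) ≠ ⊤ := by
      intro i hW
      apply htop
      have h1 : ENNReal.ofReal (l i) * W2sq Q (Pm i) = ⊤ := by
        rw [hW]
        exact ENNReal.mul_top (ne_of_gt (ENNReal.ofReal_pos.mpr (hl i)))
      have h2 : ENNReal.ofReal (l i) * W2sq Q (Pm i) ≤ phi l Pm Q := by
        rw [phi]
        exact Finset.single_le_sum (f := fun j => ENNReal.ofReal (l j) * W2sq Q (Pm j))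
          (fun j _ => zero_le) (Finset.mem_univ i)
      rw [h1, top_le_iff] at h2
      exact h2
    refine ENNReal.le_of_forall_pos_le_add fun ε hε hlt => ?_
    have hεE : (ε : ℝ≥0∞) ≠ 0 := by exact_mod_cast hε.ne'
    have hchoice : ∀ i, ∃ π : Measure (Pt d × Pt d),
        (π.map Prod.fst = Q ∧ π.map Prod.snd = Pm i) ∧
        ∫⁻ z, ENNReal.ofReal (‖z.1 - z.2‖^2) ∂π ≤ W2sq Q (Pm i) + ε := by
      intro i
      have hlt' : W2sq Q (Pm i) < W2sq Q (Pm i) + ε := ENNReal.lt_add_right (hWfin i) hεE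
      conv_lhs at hlt' => rw [W2sq]
      rw [iInf_lt_iff] at hlt'
      obtain ⟨π, hπ⟩ := hlt'
      rw [iInf_lt_iff] at hπ
      obtain ⟨hπmem, hπlt⟩ := hπ
      exact ⟨π, hπmem, hπlt.le⟩
    choose π hπmem hπcost using hchoice
    have hπuniv : ∀ i, ∀ z : Pt d × Pt d, π i {z} ≠ ⊤ := by
      intro i z
      have h1 : π i {z} ≤ π i Set.univ := measure_mono (Set.subset_univ _)
      have h2 : π i Set.univ = 1 := by
        have h0 : (π i).map Prod.fst Set.univ = Q Set.univ := by rw [(hπmem i).1]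
        rw [Measure.map_apply measurable_fst MeasurableSet.univ, Set.preimage_univ] at h0
        rw [h0]
        exact measure_univ
      rw [h2] at h1
      exact ne_top_of_le_ne_top one_ne_top h1
    set q : Pt d → ℝ := fun y => (Q {y}).toReal with hqdef
    set m : Fin N → Pt d × Pt d → ℝ := fun i z => (π i {z}).toReal with hmdef
    have hQs : Q (↑s : Set (Pt d))ᶜ = 0 := by rw [hscoe]; exact hQnull
    have hsnd_null : ∀ i, π i (Prod.snd ⁻¹' (↑(t i) : Set (Pt d))ᶜ) = 0 := by
      intro i
      rw [← Measure.map_apply measurable_snd ((t i).finite_toSet.measurableSet.compl),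
        (hπmem i).2]
      exact htnull i
    have hfst_null : ∀ i, π i (Prod.fst ⁻¹' (↑s : Set (Pt d))ᶜ) = 0 := by
      intro i
      rw [← Measure.map_apply measurable_fst (hS₀fin.toFinset.finite_toSet.measurableSet.compl),
        (hπmem i).1]
      exact hQs
    have hrow : ∀ i, ∀ y ∈ s, ∑ x ∈ t i, m i (y, x) = q y := by
      intro i y _
      have h1 : π i ({y} ×ˢ (↑(t i) : Set (Pt d))) = Q {y} := by
        have hA : π i (Prod.fst ⁻¹' ({y} : Set (Pt d))) = Q {y} := by
          rw [← Measure.map_apply measurable_fst (measurableSet_singleton y), (hπmem i).1]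
        have hsplit := measure_inter_add_diff (μ := π i)
          (Prod.fst ⁻¹' ({y} : Set (Pt d)))
          (measurable_snd ((t i).finite_toSet.measurableSet))
        have hint : Prod.fst ⁻¹' ({y} : Set (Pt d)) ∩ Prod.snd ⁻¹' (↑(t i) : Set (Pt d))
            = {y} ×ˢ (↑(t i) : Set (Pt d)) := by
          ext z
          simp only [Set.mem_inter_iff, Set.mem_preimage, Set.mem_singleton_iff,
            Set.mem_prod, Finset.mem_coe]
          try tauto
        have hdiff : π i (Prod.fst ⁻¹' ({y} : Set (Pt d)) \ Prod.snd ⁻¹' (↑(t i) : Set (Pt d)))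
            = 0 := by
          refine measure_mono_null (fun z hz => ?_) (hsnd_null i)
          exact hz.2
        rw [hint, hdiff, add_zero] at hsplit
        rw [hsplit, hA]
      have h2 : ({y} ×ˢ (↑(t i) : Set (Pt d))) = ↑(({y} : Finset (Pt d)) ×ˢ t i) := by
        rw [Finset.coe_product, Finset.coe_singleton]
      rw [h2, measure_coe_finset] at h1
      rw [Finset.sum_product, Finset.sum_singleton] at h1
      rw [hmdef, hqdef]
      have := ENNReal.toReal_sum (s := t i) (f := fun x => π i {(y, x)})
        (fun x _ => hπuniv i (y, x))
      rw [h1] at this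
      exact this.symm
    have hcol : ∀ i, ∀ x ∈ t i, ∑ y ∈ s, m i (y, x) = p i x := by
      intro i x _
      have h1 : π i ((↑s : Set (Pt d)) ×ˢ ({x} : Set (Pt d))) = Pm i {x} := by
        have hA : π i (Prod.snd ⁻¹' ({x} : Set (Pt d))) = Pm i {x} := by
          rw [← Measure.map_apply measurable_snd (measurableSet_singleton x), (hπmem i).2]
        have hsplit := measure_inter_add_diff (μ := π i)
          (Prod.snd ⁻¹' ({x} : Set (Pt d)))
          (measurable_fst (s.finite_toSet.measurableSet))
        have hint : Prod.snd ⁻¹' ({x} : Set (Pt d)) ∩ Prod.fst ⁻¹' (↑s : Set (Pt d))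
            = (↑s : Set (Pt d)) ×ˢ ({x} : Set (Pt d)) := by
          ext z
          simp only [Set.mem_inter_iff, Set.mem_preimage, Set.mem_singleton_iff,
            Set.mem_prod, Finset.mem_coe]
          try tauto
        have hdiff : π i (Prod.snd ⁻¹' ({x} : Set (Pt d)) \ Prod.fst ⁻¹' (↑s : Set (Pt d)))
            = 0 := by
          refine measure_mono_null (fun z hz => ?_) (hfst_null i)
          exact hz.2
        rw [hint, hdiff, add_zero] at hsplit
        rw [hsplit, hA]
      have h2 : ((↑s : Set (Pt d)) ×ˢ ({x} : Set (Pt d))) = ↑(s ×ˢ ({x} : Finset (Pt d))) := by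
        rw [Finset.coe_product, Finset.coe_singleton]
      rw [h2, measure_coe_finset] at h1
      rw [Finset.sum_product] at h1
      simp only [Finset.sum_singleton] at h1
      rw [hmdef, hpdef]
      have := ENNReal.toReal_sum (s := s) (f := fun y => π i {(y, x)})
        (fun y _ => hπuniv i (y, x))
      rw [h1] at this
      exact this.symm
    obtain ⟨γQ, hγQfeas, hγQpair⟩ := SparseLP.glue s t hN p q m
      (fun y => ENNReal.toReal_nonneg) (fun i e => ENNReal.toReal_nonneg) hrow hcol
    have h1 : SparseLP.cost s t c γ ≤ SparseLP.cost s t c γQ := hmin γQ hγQfeas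
    have h2 : SparseLP.cost s t c γQ
        = ∑ i, l i * ∑ z ∈ s ×ˢ t i, m i z * ‖z.1 - z.2‖^2 := by
      rw [← hswap γQ]
      refine Finset.sum_congr rfl fun i _ => ?_
      congr 1
      rw [SparseLP.sum_pair_fiber s t γQ i (fun y x => ‖y - x‖^2)]
      refine Finset.sum_congr rfl fun z hz => ?_
      obtain ⟨hz1, hz2⟩ := Finset.mem_product.mp hz
      rw [hγQpair i z.1 hz1 z.2 hz2]
    have h3 : ∀ i, ENNReal.ofReal (∑ z ∈ s ×ˢ t i, m i z * ‖z.1 - z.2‖^2)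
        ≤ ∫⁻ z, ENNReal.ofReal (‖z.1 - z.2‖^2) ∂(π i) := by
      intro i
      rw [ENNReal.ofReal_sum_of_nonneg
        (fun z _ => mul_nonneg ENNReal.toReal_nonneg (by positivity))]
      have heach : ∀ z ∈ s ×ˢ t i, ENNReal.ofReal (m i z * ‖z.1 - z.2‖^2)
          = ENNReal.ofReal (‖z.1 - z.2‖^2) * π i {z} := by
        intro z _
        rw [ENNReal.ofReal_mul ENNReal.toReal_nonneg,
          ENNReal.ofReal_toReal (hπuniv i z), mul_comm]
      rw [Finset.sum_congr rfl heach]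
      exact sum_singleton_le_lintegral (s ×ˢ t i) _ (π i)
    calc ENNReal.ofReal (SparseLP.cost s t c γ)
        ≤ ENNReal.ofReal (SparseLP.cost s t c γQ) := ENNReal.ofReal_le_ofReal h1
      _ = ∑ i, ENNReal.ofReal (l i)
            * ENNReal.ofReal (∑ z ∈ s ×ˢ t i, m i z * ‖z.1 - z.2‖^2) := by
          rw [h2, ENNReal.ofReal_sum_of_nonneg (fun i _ => mul_nonneg (hl i).le
            (Finset.sum_nonneg fun z _ => mul_nonneg ENNReal.toReal_nonneg (by positivity)))]
          exact Finset.sum_congr rfl fun i _ => ENNReal.ofReal_mul (hl i).le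
      _ ≤ ∑ i, ENNReal.ofReal (l i) * (W2sq Q (Pm i) + ε) :=
          Finset.sum_le_sum fun i _ => mul_le_mul_right ((h3 i).trans (hπcost i)) _
      _ = phi l Pm Q + (∑ i, ENNReal.ofReal (l i)) * ε := by
          rw [phi, Finset.sum_mul, ← Finset.sum_add_distrib]
          exact Finset.sum_congr rfl fun i _ => by rw [mul_add]
      _ = phi l Pm Q + ε := by
          rw [← ENNReal.ofReal_sum_of_nonneg (fun i _ => (hl i).le), hsum]
          simp
  refine ⟨P₀, hprob₀, hnull, ?_, ?_⟩
  · intro Q hQp hQn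
    exact hupper.trans (hlower Q hQp hQn)
  · set D := (SparseLP.E s t).filter (fun e => γ e ≠ 0) with hDdef
    have hsubD : msupp P₀ ⊆ ↑(D.image Prod.fst) := by
      intro b hb
      rw [msupp, Set.mem_setOf_eq] at hb
      rw [hP₀, smuldirac_singleton] at hb
      by_contra hnb
      apply hb
      refine Finset.sum_eq_zero fun e he => ?_
      by_cases h1 : e.1 = b
      · by_cases h2 : γ e = 0
        · simp [h1, h2]
        · exact absurd (Finset.mem_coe.mpr (Finset.mem_image.mpr
            ⟨e, Finset.mem_filter.mpr ⟨he, h2⟩, h1⟩)) hnb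
      · simp [h1]
    calc (msupp P₀).ncard ≤ (↑(D.image Prod.fst) : Set (Pt d)).ncard :=
          Set.ncard_le_ncard hsubD (D.image Prod.fst).finite_toSet
      _ = (D.image Prod.fst).card := Set.ncard_coe_finset _
      _ ≤ D.card := Finset.card_image_le
      _ ≤ (∑ i, (t i).card) - N + 1 := hcard
      _ = (∑ i, (msupp (Pm i)).ncard) - N + 1 := by
          congr 1
          congr 1
          refine Finset.sum_congr rfl fun i _ => ?_
          rw [← htcoe i, Set.ncard_coe_finset]
end
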